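/- arXiv:math/0606004 — 2 statements merged into one kernel-verified Lean document; each statement's English description precedes it below -/
import Mathlib

section
/- Let G be a group. Then: (i) G^{[3,2]} ⊇ G₂^{[3,1]} ⊇ G₃^{[3,3]} (the diagonal copy of G₃ in G⁸); (ii) for g ∈ G and any vertex η of the cube {0,1}³, the element g^{[3,{η}]} belongs to G^{[3,2]} if and only if g ∈ G₃; (iii) the set K := G^{[2,2]}·G₂^{[2,1]}·G₃^{[2]} is a normal subgroup of G^{[2,1]}, and under the identification of G^{[3]} with G^{[2]} × G^{[2]} via the splitting of {0,1}³ into the opposite faces ε₁ = 0 and ε₁ = 1, one has G^{[3,2]} = {(g',g'') ∈ G^{[2,1]} × G^{[2,1]} : g'·(g'')⁻¹ ∈ K}. -/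
open scoped Pointwise

namespace HK

/-- Quadruples of elements of `X`, indexed by the vertices `00, 01, 10, 11` of the square. -/
abbrev Quad (X : Type) := X × X × X × X

/-- Vertices of the cube `{0,1}³`. -/
abbrev Vtx := Fin 3 → Bool

/-- Elements of `X^{[3]} = X⁸`, indexed by the vertices of the cube. -/
abbrev Cube (X : Type) := Vtx → X

variable {X Y : Type}

/-- Apply a map coordinatewise to a quadruple. -/
def map4 (f : X → Y) (p : Quad X) : Quad Y := (f p.1, f p.2.1, f p.2.2.1, f p.2.2.2)

/-- Apply a map coordinatewise to a cube. -/
def mapCube (f : X → Y) (x : Cube X) : Cube Y := fun v => f (x v)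

/-- A weak parallelogram structure: the relation `(x00,x01) ∼ (x10,x11) ↔ (x00,x01,x10,x11) ∈ P`
is an equivalence relation, `P` is invariant under exchanging the two middle entries, and
any three points can be completed to a parallelogram. -/
def IsWeakParallelogram (P : Set (Quad X)) : Prop :=
  (∀ a b : X, (a, b, a, b) ∈ P) ∧
  (∀ a b c d : X, (a, b, c, d) ∈ P → (c, d, a, b) ∈ P) ∧
  (∀ a b c d e f : X, (a, b, c, d) ∈ P → (c, d, e, f) ∈ P → (a, b, e, f) ∈ P) ∧
  (∀ a b c d : X, (a, b, c, d) ∈ P → (a, c, b, d) ∈ P) ∧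
  (∀ a b c : X, ∃ d, (a, b, c, d) ∈ P)

/-- A strong parallelogram structure: the completing fourth point is unique. -/
def IsStrongParallelogram (P : Set (Quad X)) : Prop :=
  IsWeakParallelogram P ∧ ∀ a b c : X, ∃! d, (a, b, c, d) ∈ P

/-- The entry of a quadruple at a vertex of the square. -/
def quadAt (p : Quad X) : Bool → Bool → X
  | false, false => p.1
  | false, true => p.2.1
  | true, false => p.2.2.1
  | true, true => p.2.2.2

/-- The cube whose face `ε₁ = 0` is `p` and whose face `ε₁ = 1` is `q`. -/
def joinQuad (p q : Quad X) : Cube X :=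
  fun v => if v 0 = false then quadAt p (v 1) (v 2) else quadAt q (v 1) (v 2)

/-- The vertex of the cube with value `b` at coordinate `i` and values `u,v` at the two
remaining coordinates, taken in increasing order. -/
def insert3 (i : Fin 3) (b u v : Bool) : Vtx :=
  if i = 0 then ![b, u, v] else if i = 1 then ![u, b, v] else ![u, v, b]

/-- The face `{v : v i = b}` of a cube, as a quadruple in lexicographic order. -/
def face (x : Cube X) (i : Fin 3) (b : Bool) : Quad X :=
  (x (insert3 i b false false), x (insert3 i b false true),
   x (insert3 i b true false), x (insert3 i b true true))

/-- The permutations of the vertices of the cube induced by Euclidean isometries of the unit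
cube: a permutation of the three coordinates composed with flips of some coordinates. -/
def cubeSym (σ : Equiv.Perm (Fin 3)) (c : Vtx) (v : Vtx) : Vtx :=
  fun j => xor (v (σ j)) (c j)

/-- A weak parallelepiped structure `(P, Q)`: every face of an element of `Q` lies in `P`;
`Q` is invariant under the Euclidean permutations of the cube; the relation `≈` on `P`
(`p ≈ q ↔ joinQuad p q ∈ Q`) is an equivalence relation; and seven points whose three
determined faces lie in `P` can be completed to an element of `Q`. -/
def IsWeakParallelepiped (P : Set (Quad X)) (Q : Set (Cube X)) : Prop :=
  IsWeakParallelogram P ∧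
  (∀ x ∈ Q, ∀ (i : Fin 3) (b : Bool), face x i b ∈ P) ∧
  (∀ (σ : Equiv.Perm (Fin 3)) (c : Vtx), ∀ x ∈ Q, (fun v => x (cubeSym σ c v)) ∈ Q) ∧
  (∀ p ∈ P, joinQuad p p ∈ Q) ∧
  (∀ p q : Quad X, joinQuad p q ∈ Q → joinQuad q p ∈ Q) ∧
  (∀ p q r : Quad X, joinQuad p q ∈ Q → joinQuad q r ∈ Q → joinQuad p r ∈ Q) ∧
  (∀ x000 x001 x010 x011 x100 x101 x110 : X,
    (x000, x001, x010, x011) ∈ P → (x000, x010, x100, x110) ∈ P →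
    (x000, x001, x100, x101) ∈ P →
    ∃ x111, joinQuad (x000, x001, x010, x011) (x100, x101, x110, x111) ∈ Q)

/-- A strong parallelepiped structure: the completing eighth point is unique. -/
def IsStrongParallelepiped (P : Set (Quad X)) (Q : Set (Cube X)) : Prop :=
  IsWeakParallelepiped P Q ∧
  ∀ x000 x001 x010 x011 x100 x101 x110 : X,
    (x000, x001, x010, x011) ∈ P → (x000, x010, x100, x110) ∈ P →
    (x000, x001, x100, x101) ∈ P →
    ∃! x111, joinQuad (x000, x001, x010, x011) (x100, x101, x110, x111) ∈ Q

/-- The setoid on `X²` given by the parallelogram relation `∼`. -/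
def baseSetoid (P : Set (Quad X)) (hP : IsWeakParallelogram P) : Setoid (X × X) where
  r p q := (p.1, p.2, q.1, q.2) ∈ P
  iseqv := ⟨fun p => hP.1 p.1 p.2,
            fun h => hP.2.1 _ _ _ _ h,
            fun h h' => hP.2.2.1 _ _ _ _ _ _ h h'⟩

/-- The base `B = X²/∼` of a weak parallelogram structure. -/
def Base (P : Set (Quad X)) (hP : IsWeakParallelogram P) : Type := Quotient (baseSetoid P hP)

/-- The class `⟨x,y⟩ ∈ B` of a pair `(x,y)`. -/
def cls (P : Set (Quad X)) (hP : IsWeakParallelogram P) (x y : X) : Base P hP :=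
  Quotient.mk (baseSetoid P hP) (x, y)

/-- The Gowers-type sum over parallelograms attached to a finitely supported `f : X → ℂ`. -/
noncomputable def gSum2 (P : Set (Quad X)) (f : X →₀ ℂ) : ℂ :=
  ∑ᶠ q ∈ P, f q.1 * (starRingEnd ℂ) (f q.2.1) * (starRingEnd ℂ) (f q.2.2.1) * f q.2.2.2

/-- The seminorm `‖f‖_P = (gSum2 P f)^{1/4}`. -/
noncomputable def pNorm (P : Set (Quad X)) (f : X →₀ ℂ) : ℝ :=
  (gSum2 P f).re ^ ((1 : ℝ) / 4)

/-- `C^{|ε|} z`: conjugate `z` when the vertex `v` has an odd number of `1` entries. -/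
noncomputable def cConjFactor (v : Vtx) (z : ℂ) : ℂ :=
  if xor (v 0) (xor (v 1) (v 2)) then (starRingEnd ℂ) z else z

/-- The Gowers-type sum over parallelepipeds attached to a finitely supported `f : X → ℂ`. -/
noncomputable def gSum3 (Q : Set (Cube X)) (f : X →₀ ℂ) : ℂ :=
  ∑ᶠ x ∈ Q, ∏ v : Vtx, cConjFactor v (f (x v))

/-- The seminorm `‖f‖_Q = (gSum3 Q f)^{1/8}`. -/
noncomputable def qNorm (Q : Set (Cube X)) (f : X →₀ ℂ) : ℝ :=
  (gSum3 Q f).re ^ ((1 : ℝ) / 8)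

/-- The structure group of a parallelepiped structure, as a set of bijections of `X`:
those `g` mapping every parallelogram to an equivalent parallelogram. -/
def structSet (P : Set (Quad X)) (Q : Set (Cube X)) : Set (Equiv.Perm X) :=
  {g | ∀ p ∈ P, map4 g p ∈ P ∧ joinQuad (map4 g p) p ∈ Q}

/-- `x` and `y` lie in the same fiber of `π : X → B`, `π(x) = ⟨i,x⟩`. -/
def sameFiber (P : Set (Quad X)) (i x y : X) : Prop := (i, x, i, y) ∈ P

/-- A vertical quadruple: all four points lie in one fiber. -/
def VerticalQ (P : Set (Quad X)) (i : X) (w : Quad X) : Prop :=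
  sameFiber P i w.1 w.2.1 ∧ sameFiber P i w.2.1 w.2.2.1 ∧ sameFiber P i w.2.2.1 w.2.2.2

/-- `y = u·x` where `u = [w]` is the class of the vertical parallelogram `w`:
`(x,x,x,y)` is a parallelogram equivalent to `w`. -/
def actsRel (P : Set (Quad X)) (Q : Set (Cube X)) (w : Quad X) (x y : X) : Prop :=
  (x, x, x, y) ∈ P ∧ joinQuad (x, x, x, y) w ∈ Q

section Groups

variable (G : Type) [Group G]

/-- The diagonal embedding `G → G^{[2]}`. -/
def diagHom2 : G →* Quad G where
  toFun g := (g, g, g, g)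
  map_one' := rfl
  map_mul' _ _ := rfl

/-- The diagonal embedding `G → G^{[3]}`. -/
def diagHom3 : G →* Cube G where
  toFun g := fun _ => g
  map_one' := rfl
  map_mul' _ _ := rfl

/-- The two dimensional edge group `G^{[2,1]}`. -/
def edgeGroup2 : Subgroup (Quad G) :=
  Subgroup.closure
    {q : Quad G | ∃ g : G, q = (g, g, 1, 1) ∨ q = (g, 1, g, 1) ∨ q = (g, g, g, g)}

/-- The second commutator subgroup `G₃ = [G, G₂]`. -/
def secondCommutator : Subgroup G := ⁅(⊤ : Subgroup G), commutator G⁆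

variable {G}

/-- The edge group `F^{[2,1]}` of a subgroup `F ≤ G`, inside `G^{[2]}`. -/
def edgeGroup2Of (F : Subgroup G) : Subgroup (Quad G) :=
  Subgroup.closure
    {q : Quad G | ∃ u ∈ F, q = (u, u, 1, 1) ∨ q = (u, 1, u, 1) ∨ q = (u, u, u, u)}

/-- `F^{[2]} = F⁴` as a subgroup of `G^{[2]}`. -/
def quadSub (F : Subgroup G) : Subgroup (Quad G) := F.prod (F.prod (F.prod F))

/-- Faces of the cube `{0,1}³`. -/
def IsFace3 (α : Set Vtx) : Prop := ∃ (i : Fin 3) (b : Bool), α = {v : Vtx | v i = b}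

/-- Edges of the cube `{0,1}³`. -/
def IsEdge3 (α : Set Vtx) : Prop :=
  ∃ (i j : Fin 3) (b c : Bool), i ≠ j ∧ α = {v : Vtx | v i = b ∧ v j = c}

open Classical in
/-- The element `g^{[3,α]}` of `G^{[3]}`, with coordinate `g` on `α` and `1` elsewhere. -/
noncomputable def cubeElt (α : Set Vtx) (g : G) : Cube G :=
  fun v => if v ∈ α then g else 1

variable (G)

/-- The face group `G^{[3,2]}`, generated by the `g^{[3,f]}` for faces `f` of the cube. -/
noncomputable def faceGroup : Subgroup (Cube G) :=
  Subgroup.closure {x : Cube G | ∃ (g : G) (α : Set Vtx), IsFace3 α ∧ x = cubeElt α g}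

variable {G}

/-- The edge group `F^{[3,1]}` of a subgroup `F ≤ G`, generated by the `u^{[3,e]}` for
`u ∈ F` and edges `e` of the cube. -/
noncomputable def edgeGroup3 (F : Subgroup G) : Subgroup (Cube G) :=
  Subgroup.closure {x : Cube G | ∃ u ∈ F, ∃ α : Set Vtx, IsEdge3 α ∧ x = cubeElt α u}

end Groups

/-- The data realizing `(PY, QY)` as the nilparallelepiped structure associated to
`G`, `F`, `Γ` via the coset projection `p : G → Y ≅ G/Γ`. -/
def NilWitness (G : Type) [Group G] (F Γ : Subgroup G) {Y : Type} (p : G → Y)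
    (PY : Set (Quad Y)) (QY : Set (Cube Y)) : Prop :=
  commutator G ≤ F ∧ F ≤ Subgroup.center G ∧ Γ ⊓ F = ⊥ ∧
  Function.Surjective p ∧ (∀ g g' : G, p g = p g' ↔ g⁻¹ * g' ∈ Γ) ∧
  PY = map4 p '' ((edgeGroup2 G : Set (Quad G)) * (quadSub F : Set (Quad G))) ∧
  QY = mapCube p '' ((faceGroup G : Set (Cube G)) * (edgeGroup3 F : Set (Cube G)))

/-- `(PY, QY)` is a nilparallelepiped structure. -/
def IsNilStructure {Y : Type} (PY : Set (Quad Y)) (QY : Set (Cube Y)) : Prop :=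
  ∃ (G : Type) (inst : Group G) (F Γ : @Subgroup G inst) (p : G → Y),
    @NilWitness G inst F Γ Y p PY QY

/-- A splitting of the exact sequence `0 → F → P_s → B → 0` for `s = ⟨a₀, b₀⟩`, encoded
by a lift `ψ : X → 𝒫_s` of a homomorphism section `φ : B → P_s` of `q_s`:
`ψ x` is a parallelogram in `𝒫_s` representing the class `φ(π(x))`. -/
def IsSplittingAt (P : Set (Quad X)) (Q : Set (Cube X)) (i a₀ b₀ : X) : Prop :=
  ∃ ψ : X → Quad X,
    (∀ x, ψ x ∈ P) ∧
    (∀ x, (a₀, b₀, (ψ x).1, (ψ x).2.1) ∈ P) ∧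
    (∀ x, ((ψ x).1, (ψ x).2.2.1, i, x) ∈ P) ∧
    (∀ x y, (i, x, i, y) ∈ P → joinQuad (ψ x) (ψ y) ∈ Q) ∧
    (∀ x1 x2 x3, (x1, x3, i, x2) ∈ P →
      ∃ c d, joinQuad ((ψ x1).2.2.1, (ψ x1).2.2.2, c, d) (ψ x2) ∈ Q ∧
        joinQuad ((ψ x1).1, (ψ x1).2.1, c, d) (ψ x3) ∈ Q)

/-- `(B, c)` is a realization of the base group of the parallelogram structure `P`,
`c x y` realizing the class `⟨x,y⟩`. -/
def IsBaseRealization (P : Set (Quad X)) (B : Type) [AddCommGroup B] (c : X → X → B) : Prop :=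
  (Function.Surjective fun p : X × X => c p.1 p.2) ∧
  (∀ a b a' b' : X, c a b = c a' b' ↔ (a, b, a', b') ∈ P) ∧
  (∀ a b d : X, c a b + c b d = c a d)

/-- `(F, fl)` is a realization of the fiber group of the parallelepiped structure `(P, Q)`:
`fl` maps vertical parallelograms onto `F`, separates exactly the `≈`-classes, and is
additive with respect to the composition of vertical parallelograms. -/
def IsFiberRealization (P : Set (Quad X)) (Q : Set (Cube X)) (i : X) (F : Type)
    [AddCommGroup F] (fl : Quad X → F) : Prop :=
  (∀ u : F, ∃ w, VerticalQ P i w ∧ fl w = u) ∧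
  (∀ w w' : Quad X, VerticalQ P i w → VerticalQ P i w' →
    (fl w = fl w' ↔ joinQuad w w' ∈ Q)) ∧
  (∀ x0 x1 x2 x3 x4 x5 : X, sameFiber P i x0 x1 → sameFiber P i x1 x2 →
    sameFiber P i x2 x3 → sameFiber P i x3 x4 → sameFiber P i x4 x5 →
    fl (x0, x1, x2, x3) + fl (x2, x3, x4, x5) = fl (x0, x1, x4, x5))

/-- A divisible (equivalently, injective) abelian group. -/
def IsDivisibleGroup (F : Type) [AddCommGroup F] : Prop :=
  ∀ (u : F) (n : ℕ), 0 < n → ∃ v : F, n • v = u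

/-- A projective abelian group (projective as a `ℤ`-module). -/
def IsProjectiveAdd (B : Type) [AddCommGroup B] : Prop := Module.Projective ℤ B


/-! ### Auxiliary development for Statement 9 -/

namespace S9

open scoped commutatorElement

variable {G : Type} [Group G]

instance norm3 : (secondCommutator G).Normal := by
  unfold secondCommutator; infer_instance

lemma G3_le_G2 : secondCommutator G ≤ commutator G :=
  Subgroup.commutator_le_right _ _

lemma comm_mem_G2 (g h : G) : ⁅g, h⁆ ∈ commutator G :=
  Subgroup.commutator_mem_commutator (Subgroup.mem_top g) (Subgroup.mem_top h)

lemma comm_mem_G3 (g : G) {u : G} (hu : u ∈ commutator G) : ⁅g, u⁆ ∈ secondCommutator G :=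
  Subgroup.commutator_mem_commutator (Subgroup.mem_top g) hu

lemma commElt_mem {H : Type} [Group H] {S : Subgroup H} {x y : H} (hx : x ∈ S) (hy : y ∈ S) :
    ⁅x, y⁆ ∈ S := by
  rw [commutatorElement_def]
  exact mul_mem (mul_mem (mul_mem hx hy) (inv_mem hx)) (inv_mem hy)

lemma swap_left {H : Type} [Group H] {a b : H} (h : Commute a b) (c : H) :
    a * (b * c) = b * (a * c) := by rw [← mul_assoc, h.eq, mul_assoc]

/-- The quotient `G/G₃`. -/
abbrev Qt (G : Type) [Group G] := G ⧸ secondCommutator G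

lemma central {v : G} (hv : v ∈ commutator G) (x : Qt G) :
    Commute ((v : Qt G)) x := by
  refine QuotientGroup.induction_on x fun g => ?_
  show ((v : Qt G)) * (g : Qt G) = (g : Qt G) * (v : Qt G)
  rw [← QuotientGroup.mk_mul, ← QuotientGroup.mk_mul, QuotientGroup.eq]
  have h : (v * g)⁻¹ * (g * v) = ⁅g⁻¹, v⁻¹⁆ := by group
  rw [h]
  exact comm_mem_G3 _ (inv_mem hv)

private lemma word_eq {H : Type} [Group H] {U V U' : H} (A A' V' : H)
    (cUA : Commute U A') (cVA : Commute V A') (cVU : Commute V U') :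
    A * U * V * (A' * U' * V') = A * A' * (U * U') * (V * V') := by
  simp only [mul_assoc]
  rw [swap_left cVA, swap_left cVU, swap_left cUA]

/-! ### `cubeElt` basics -/

lemma cubeElt_one (α : Set Vtx) : cubeElt α (1 : G) = 1 := by
  funext v; by_cases hv : v ∈ α <;> simp [cubeElt, hv]

lemma cubeElt_mul (α : Set Vtx) (g h : G) :
    cubeElt α (g * h) = cubeElt α g * cubeElt α h := by
  funext v; by_cases hv : v ∈ α <;> simp [cubeElt, hv]

noncomputable def cubeHom (α : Set Vtx) : G →* Cube G where
  toFun := cubeElt α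
  map_one' := cubeElt_one α
  map_mul' := cubeElt_mul α

lemma cubeElt_commutator (α β : Set Vtx) (g h : G) :
    cubeElt (α ∩ β) ⁅g, h⁆ = ⁅cubeElt α g, cubeElt β h⁆ := by
  funext v
  by_cases ha : v ∈ α <;> by_cases hb : v ∈ β <;>
    simp [cubeElt, commutatorElement_def, ha, hb, Set.mem_inter_iff]

/-! ### membership in the face group -/

lemma mem_faceGroup_of_face {α : Set Vtx} (hα : IsFace3 α) (g : G) :
    cubeElt α g ∈ faceGroup G :=
  Subgroup.subset_closure ⟨g, α, hα, rfl⟩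

lemma map_commutator_le {α β : Set Vtx} {A B : Subgroup G}
    (hA : ∀ a ∈ A, cubeElt α a ∈ faceGroup G) (hB : ∀ b ∈ B, cubeElt β b ∈ faceGroup G) :
    ∀ g ∈ ⁅A, B⁆, cubeElt (α ∩ β) g ∈ faceGroup G := by
  intro g hg
  have hle : Subgroup.map (cubeHom (α ∩ β)) ⁅A, B⁆ ≤ faceGroup G := by
    rw [Subgroup.commutator_def, MonoidHom.map_closure]
    refine (Subgroup.closure_le _).mpr ?_
    rintro x ⟨y, ⟨a, ha, b, hb, rfl⟩, rfl⟩
    show cubeElt (α ∩ β) ⁅a, b⁆ ∈ faceGroup G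
    rw [cubeElt_commutator]
    exact commElt_mem (hA a ha) (hB b hb)
  exact hle ⟨g, hg, rfl⟩

lemma edge_mem_faceGroup (i j : Fin 3) (b c : Bool) {u : G} (hu : u ∈ commutator G) :
    cubeElt {v : Vtx | v i = b ∧ v j = c} u ∈ faceGroup G := by
  have hset : {v : Vtx | v i = b ∧ v j = c} =
      {v : Vtx | v i = b} ∩ {v : Vtx | v j = c} := rfl
  rw [hset]
  exact map_commutator_le (A := ⊤) (B := ⊤)
    (fun a _ => mem_faceGroup_of_face ⟨i, b, rfl⟩ a)
    (fun a _ => mem_faceGroup_of_face ⟨j, c, rfl⟩ a) u hu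

lemma singleton_inter (η : Vtx) :
    ({η} : Set Vtx) = {v : Vtx | v 0 = η 0} ∩ {v : Vtx | v 1 = η 1 ∧ v 2 = η 2} := by
  ext v
  simp only [Set.mem_singleton_iff, Set.mem_inter_iff, Set.mem_setOf_eq]
  constructor
  · rintro rfl; exact ⟨rfl, rfl, rfl⟩
  · rintro ⟨h0, h1, h2⟩; funext i; fin_cases i
    exacts [h0, h1, h2]

lemma vertex_mem_faceGroup (η : Vtx) {g : G} (hg : g ∈ secondCommutator G) :
    cubeElt {η} g ∈ faceGroup G := by
  rw [singleton_inter η]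
  exact map_commutator_le (A := ⊤) (B := commutator G)
    (fun a _ => mem_faceGroup_of_face ⟨0, η 0, rfl⟩ a)
    (fun b hb => edge_mem_faceGroup 1 2 (η 1) (η 2) hb) g hg

/-! ### membership in the two-dimensional edge group -/

lemma mem_E2_gen1 (g : G) : ((g, g, 1, 1) : Quad G) ∈ edgeGroup2 G :=
  Subgroup.subset_closure ⟨g, Or.inl rfl⟩

lemma mem_E2_gen2 (g : G) : ((g, 1, g, 1) : Quad G) ∈ edgeGroup2 G :=
  Subgroup.subset_closure ⟨g, Or.inr (Or.inl rfl)⟩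

lemma mem_E2_gen3 (g : G) : ((g, g, g, g) : Quad G) ∈ edgeGroup2 G :=
  Subgroup.subset_closure ⟨g, Or.inr (Or.inr rfl)⟩

lemma mem_E2_0101 (s : G) : ((1, s, 1, s) : Quad G) ∈ edgeGroup2 G := by
  have h : ((1, s, 1, s) : Quad G) = (s, s, s, s) * (s, 1, s, 1)⁻¹ := by
    simp [Prod.ext_iff]
  rw [h]; exact mul_mem (mem_E2_gen3 s) (inv_mem (mem_E2_gen2 s))

lemma mem_E2_0011 (t : G) : ((1, 1, t, t) : Quad G) ∈ edgeGroup2 G := by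
  have h : ((1, 1, t, t) : Quad G) = (t, t, t, t) * (t, t, 1, 1)⁻¹ := by
    simp [Prod.ext_iff]
  rw [h]; exact mul_mem (mem_E2_gen3 t) (inv_mem (mem_E2_gen1 t))

def j44 (G : Type) [Group G] : G →* Quad G where
  toFun g := (1, 1, 1, g)
  map_one' := rfl
  map_mul' x y := by simp [Prod.ext_iff]

lemma mem_E2_0001 {w : G} (hw : w ∈ commutator G) : ((1, 1, 1, w) : Quad G) ∈ edgeGroup2 G := by
  have hle : Subgroup.map (j44 G) (commutator G) ≤ edgeGroup2 G := by
    rw [commutator_def, Subgroup.commutator_def, MonoidHom.map_closure]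
    refine (Subgroup.closure_le _).mpr ?_
    rintro x ⟨y, ⟨a, -, b, -, rfl⟩, rfl⟩
    show ((1, 1, 1, ⁅a, b⁆) : Quad G) ∈ edgeGroup2 G
    have h : ((1, 1, 1, ⁅a, b⁆) : Quad G) = ⁅((1, a, 1, a) : Quad G), ((1, 1, b, b) : Quad G)⁆ := by
      simp [commutatorElement_def, Prod.ext_iff]
    rw [h]
    exact commElt_mem (mem_E2_0101 a) (mem_E2_0011 b)
  exact hle ⟨w, hw, rfl⟩

lemma mem_E2_of (a b c d : G) (h : c⁻¹ * a * b⁻¹ * d ∈ commutator G) :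
    ((a, b, c, d) : Quad G) ∈ edgeGroup2 G := by
  have key : ((a, b, c, d) : Quad G)
      = (a, a, a, a) * (1, a⁻¹ * b, 1, a⁻¹ * b) * (1, 1, a⁻¹ * c, a⁻¹ * c)
        * (1, 1, 1, c⁻¹ * a * b⁻¹ * d) := by
    simp only [Prod.mk_mul_mk, Prod.mk.injEq] <;> and_intros <;> group
  rw [key]
  exact mul_mem (mul_mem (mul_mem (mem_E2_gen3 a) (mem_E2_0101 _)) (mem_E2_0011 _))
    (mem_E2_0001 h)

/-! ### the subgroups `D`, `E`, `N`, `M`, `K` -/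

def Dg (G : Type) [Group G] : Subgroup (Quad G) := Subgroup.map (diagHom2 G) ⊤

def Eg (G : Type) [Group G] : Subgroup (Quad G) := edgeGroup2Of (commutator G)

def Ng (G : Type) [Group G] : Subgroup (Quad G) := quadSub (secondCommutator G)

def Mg (G : Type) [Group G] : Subgroup (Quad G) := Eg G ⊔ Ng G

def Kg (G : Type) [Group G] : Subgroup (Quad G) := Dg G ⊔ Mg G

lemma mem_Dg (g : G) : ((g, g, g, g) : Quad G) ∈ Dg G :=
  ⟨g, Subgroup.mem_top g, rfl⟩

lemma mem_Ng_iff {p : Quad G} :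
    p ∈ Ng G ↔ p.1 ∈ secondCommutator G ∧ p.2.1 ∈ secondCommutator G ∧
      p.2.2.1 ∈ secondCommutator G ∧ p.2.2.2 ∈ secondCommutator G := by
  simp [Ng, quadSub, Subgroup.mem_prod]

lemma mem_Eg_gen1 {u : G} (hu : u ∈ commutator G) : ((u, u, 1, 1) : Quad G) ∈ Eg G :=
  Subgroup.subset_closure ⟨u, hu, Or.inl rfl⟩

lemma mem_Eg_gen2 {u : G} (hu : u ∈ commutator G) : ((u, 1, u, 1) : Quad G) ∈ Eg G :=
  Subgroup.subset_closure ⟨u, hu, Or.inr (Or.inl rfl)⟩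

lemma mem_Eg_gen3 {u : G} (hu : u ∈ commutator G) : ((u, u, u, u) : Quad G) ∈ Eg G :=
  Subgroup.subset_closure ⟨u, hu, Or.inr (Or.inr rfl)⟩

lemma mem_Eg_0101 {v : G} (hv : v ∈ commutator G) : ((1, v, 1, v) : Quad G) ∈ Eg G := by
  have h : ((1, v, 1, v) : Quad G) = (v, v, v, v) * (v, 1, v, 1)⁻¹ := by
    simp [Prod.ext_iff]
  rw [h]; exact mul_mem (mem_Eg_gen3 hv) (inv_mem (mem_Eg_gen2 hv))

lemma mem_Eg_0011 {u : G} (hu : u ∈ commutator G) : ((1, 1, u, u) : Quad G) ∈ Eg G := by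
  have h : ((1, 1, u, u) : Quad G) = (u, u, u, u) * (u, u, 1, 1)⁻¹ := by
    simp [Prod.ext_iff]
  rw [h]; exact mul_mem (mem_Eg_gen3 hu) (inv_mem (mem_Eg_gen1 hu))

instance normNg : (Ng G).Normal := by
  constructor
  rintro ⟨a, b, c, d⟩ hn ⟨x, y, z, w⟩
  rw [mem_Ng_iff] at hn
  obtain ⟨h1, h2, h3, h4⟩ := hn
  rw [mem_Ng_iff]
  simp only [Prod.inv_mk, Prod.mk_mul_mk]
  exact ⟨norm3.conj_mem _ h1 x, norm3.conj_mem _ h2 y, norm3.conj_mem _ h3 z,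
    norm3.conj_mem _ h4 w⟩

lemma Mg_eq : Mg G = Subgroup.closure
    ({q : Quad G | ∃ u ∈ commutator G, q = (u, u, 1, 1) ∨ q = (u, 1, u, 1) ∨ q = (u, u, u, u)}
      ∪ (Ng G : Set (Quad G))) := by
  rw [Subgroup.closure_union, Subgroup.closure_eq]; rfl

instance normMg : (Mg G).Normal := by
  constructor
  intro n hn g
  rw [Mg_eq] at hn
  revert g
  refine Subgroup.closure_induction
    (p := fun x _ => ∀ g : Quad G, g * x * g⁻¹ ∈ Mg G) ?_ ?_ ?_ ?_ hn
  · rintro x (⟨u, hu, (rfl | rfl | rfl)⟩ | hx) g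
    · obtain ⟨g1, g2, g3, g4⟩ := g
      have key : ((g1, g2, g3, g4) : Quad G) * (u, u, 1, 1) * (g1, g2, g3, g4)⁻¹
          = (⁅g1, u⁆, ⁅g2, u⁆, 1, 1) * (u, u, 1, 1) := by
        simp only [Prod.mk_mul_mk, Prod.inv_mk, Prod.mk.injEq, commutatorElement_def] <;>
          and_intros <;> group
      rw [key]
      exact mul_mem
        ((le_sup_right : Ng G ≤ Mg G) (mem_Ng_iff.mpr
          ⟨comm_mem_G3 g1 hu, comm_mem_G3 g2 hu, one_mem _, one_mem _⟩))
        ((le_sup_left : Eg G ≤ Mg G) (mem_Eg_gen1 hu))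
    · obtain ⟨g1, g2, g3, g4⟩ := g
      have key : ((g1, g2, g3, g4) : Quad G) * (u, 1, u, 1) * (g1, g2, g3, g4)⁻¹
          = (⁅g1, u⁆, 1, ⁅g3, u⁆, 1) * (u, 1, u, 1) := by
        simp only [Prod.mk_mul_mk, Prod.inv_mk, Prod.mk.injEq, commutatorElement_def] <;>
          and_intros <;> group
      rw [key]
      exact mul_mem
        ((le_sup_right : Ng G ≤ Mg G) (mem_Ng_iff.mpr
          ⟨comm_mem_G3 g1 hu, one_mem _, comm_mem_G3 g3 hu, one_mem _⟩))
        ((le_sup_left : Eg G ≤ Mg G) (mem_Eg_gen2 hu))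
    · obtain ⟨g1, g2, g3, g4⟩ := g
      have key : ((g1, g2, g3, g4) : Quad G) * (u, u, u, u) * (g1, g2, g3, g4)⁻¹
          = (⁅g1, u⁆, ⁅g2, u⁆, ⁅g3, u⁆, ⁅g4, u⁆) * (u, u, u, u) := by
        simp only [Prod.mk_mul_mk, Prod.inv_mk, Prod.mk.injEq, commutatorElement_def] <;>
          and_intros <;> group
      rw [key]
      exact mul_mem
        ((le_sup_right : Ng G ≤ Mg G) (mem_Ng_iff.mpr
          ⟨comm_mem_G3 g1 hu, comm_mem_G3 g2 hu, comm_mem_G3 g3 hu, comm_mem_G3 g4 hu⟩))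
        ((le_sup_left : Eg G ≤ Mg G) (mem_Eg_gen3 hu))
    · exact (le_sup_right : Ng G ≤ Mg G) (normNg.conj_mem _ hx g)
  · intro g
    have h : g * (1 : Quad G) * g⁻¹ = 1 := by group
    rw [h]; exact one_mem _
  · intro x y _ _ ihx ihy g
    have key : g * (x * y) * g⁻¹ = (g * x * g⁻¹) * (g * y * g⁻¹) := by group
    rw [key]; exact mul_mem (ihx g) (ihy g)
  · intro x _ ih g
    have key : g * x⁻¹ * g⁻¹ = (g * x * g⁻¹)⁻¹ := by group
    rw [key]; exact inv_mem (ih g)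

lemma Kg_coe : (Kg G : Set (Quad G)) =
    (Dg G : Set (Quad G)) * (Eg G : Set (Quad G)) * (Ng G : Set (Quad G)) := by
  have h1 : (Kg G : Set (Quad G)) = (Dg G : Set (Quad G)) * (Mg G : Set (Quad G)) :=
    Subgroup.mul_normal (Dg G) (Mg G)
  have h2 : (Mg G : Set (Quad G)) = (Eg G : Set (Quad G)) * (Ng G : Set (Quad G)) :=
    Subgroup.mul_normal (Eg G) (Ng G)
  rw [h1, h2, mul_assoc]

/-! ### the congruence description `Kc` of `K` -/

def Kc (G : Type) [Group G] : Subgroup (Quad G) where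
  carrier := {p | ∃ u v : G, u ∈ commutator G ∧ v ∈ commutator G ∧
    (p.2.1 : Qt G) = (p.1 : Qt G) * (v : Qt G) ∧
    (p.2.2.1 : Qt G) = (p.1 : Qt G) * (u : Qt G) ∧
    (p.2.2.2 : Qt G) = (p.1 : Qt G) * (u : Qt G) * (v : Qt G)}
  one_mem' := ⟨1, 1, one_mem _, one_mem _, by simp, by simp, by simp⟩
  mul_mem' := by
    rintro p q ⟨u, v, hu, hv, h1, h2, h3⟩ ⟨u', v', hu', hv', h1', h2', h3'⟩
    refine ⟨u * u', v * v', mul_mem hu hu', mul_mem hv hv', ?_, ?_, ?_⟩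
    · simp only [Prod.fst_mul, Prod.snd_mul, QuotientGroup.mk_mul, h1, h1']
      exact (central hv _).mul_mul_mul_comm _ _
    · simp only [Prod.fst_mul, Prod.snd_mul, QuotientGroup.mk_mul, h2, h2']
      exact (central hu _).mul_mul_mul_comm _ _
    · simp only [Prod.fst_mul, Prod.snd_mul, QuotientGroup.mk_mul, h3, h3']
      exact word_eq _ _ _ (central hu _) (central hv _) (central hv _)
  inv_mem' := by
    rintro p ⟨u, v, hu, hv, h1, h2, h3⟩
    refine ⟨u⁻¹, v⁻¹, inv_mem hu, inv_mem hv, ?_, ?_, ?_⟩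
    · simp only [Prod.fst_inv, Prod.snd_inv, QuotientGroup.mk_inv, h1, mul_inv_rev]
      exact ((central hv _).inv_left.inv_right).eq
    · simp only [Prod.fst_inv, Prod.snd_inv, QuotientGroup.mk_inv, h2, mul_inv_rev]
      exact ((central hu _).inv_left.inv_right).eq
    · simp only [Prod.fst_inv, Prod.snd_inv, QuotientGroup.mk_inv, h3, mul_inv_rev]
      have cV : Commute ((v : Qt G))⁻¹ ((p.1 : Qt G))⁻¹ :=
        (central hv ((p.1 : Qt G))⁻¹).inv_left
      have cU : Commute ((u : Qt G))⁻¹ ((p.1 : Qt G))⁻¹ :=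
        (central hu ((p.1 : Qt G))⁻¹).inv_left
      have cVU : Commute ((v : Qt G))⁻¹ ((u : Qt G))⁻¹ :=
        (central hv ((u : Qt G))⁻¹).inv_left
      rw [swap_left cVU, cV.eq, swap_left cU]
      exact (mul_assoc _ _ _).symm


lemma mem_Kc_iff {p : Quad G} : p ∈ Kc G ↔ ∃ u v : G, u ∈ commutator G ∧ v ∈ commutator G ∧
    (p.2.1 : Qt G) = (p.1 : Qt G) * (v : Qt G) ∧
    (p.2.2.1 : Qt G) = (p.1 : Qt G) * (u : Qt G) ∧
    (p.2.2.2 : Qt G) = (p.1 : Qt G) * (u : Qt G) * (v : Qt G) := Iff.rfl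

lemma Dg_le_Kc : Dg G ≤ Kc G := by
  rintro _ ⟨g, -, rfl⟩
  show ((g, g, g, g) : Quad G) ∈ Kc G
  exact ⟨1, 1, one_mem _, one_mem _, by simp, by simp, by simp⟩

lemma Eg_le_Kc : Eg G ≤ Kc G := by
  refine (Subgroup.closure_le _).mpr ?_
  rintro q ⟨w, hw, (rfl | rfl | rfl)⟩
  · exact ⟨w⁻¹, 1, inv_mem hw, one_mem _, by simp, by simp, by simp⟩
  · exact ⟨1, w⁻¹, one_mem _, inv_mem hw, by simp, by simp, by simp⟩
  · exact ⟨1, 1, one_mem _, one_mem _, by simp, by simp, by simp⟩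

lemma Ng_le_Kc : Ng G ≤ Kc G := by
  intro p hp
  rw [mem_Ng_iff] at hp
  obtain ⟨h1, h2, h3, h4⟩ := hp
  have e : ∀ x : G, x ∈ secondCommutator G → (x : Qt G) = 1 := fun x hx =>
    (QuotientGroup.eq_one_iff x).mpr hx
  exact ⟨1, 1, one_mem _, one_mem _, by simp [e _ h1, e _ h2], by simp [e _ h1, e _ h3],
    by simp [e _ h1, e _ h4]⟩

lemma Kg_le_Kc : Kg G ≤ Kc G := sup_le Dg_le_Kc (sup_le Eg_le_Kc Ng_le_Kc)

lemma Kc_le_Kg : Kc G ≤ Kg G := by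
  rintro ⟨a, b, c, d⟩ ⟨u, v, hu, hv, h1, h2, h3⟩
  dsimp only at h1 h2 h3
  rw [← SetLike.mem_coe, Kg_coe]
  have hb : (a * v)⁻¹ * b ∈ secondCommutator G := by
    rw [← QuotientGroup.eq, QuotientGroup.mk_mul]; exact h1.symm
  have hc : (a * u)⁻¹ * c ∈ secondCommutator G := by
    rw [← QuotientGroup.eq, QuotientGroup.mk_mul]; exact h2.symm
  have hd0 : (a * u * v)⁻¹ * d ∈ secondCommutator G := by
    rw [← QuotientGroup.eq, QuotientGroup.mk_mul, QuotientGroup.mk_mul]; exact h3.symm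
  have hd : (a * (v * u))⁻¹ * d ∈ secondCommutator G := by
    have hcomm : ⁅u⁻¹, v⁻¹⁆ ∈ secondCommutator G := comm_mem_G3 _ (inv_mem hv)
    have key : (a * (v * u))⁻¹ * d = ⁅u⁻¹, v⁻¹⁆ * ((a * u * v)⁻¹ * d) := by group
    rw [key]; exact mul_mem hcomm hd0
  have hD : ((a, a, a, a) : Quad G) ∈ (Dg G : Set (Quad G)) := mem_Dg a
  have hE : ((1, v, 1, v) * (1, 1, u, u) : Quad G) ∈ (Eg G : Set (Quad G)) :=
    mul_mem (mem_Eg_0101 hv) (mem_Eg_0011 hu)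
  have hN : ((1, (a * v)⁻¹ * b, (a * u)⁻¹ * c, (a * (v * u))⁻¹ * d) : Quad G)
      ∈ (Ng G : Set (Quad G)) := mem_Ng_iff.mpr ⟨one_mem _, hb, hc, hd⟩
  have key : ((a, b, c, d) : Quad G) = (a, a, a, a) * ((1, v, 1, v) * (1, 1, u, u))
      * (1, (a * v)⁻¹ * b, (a * u)⁻¹ * c, (a * (v * u))⁻¹ * d) := by
    simp only [Prod.mk_mul_mk, Prod.mk.injEq] <;> and_intros <;> group
  rw [key]
  exact Set.mul_mem_mul (Set.mul_mem_mul hD hE) hN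

/-! ### conjugation stability of `K` under the edge group -/

lemma conj_diag_mem {x : Quad G} (hx : x ∈ edgeGroup2 G) (g : G) :
    x * (g, g, g, g) * x⁻¹ * ((g, g, g, g) : Quad G)⁻¹ ∈ Mg G := by
  revert g
  refine Subgroup.closure_induction
    (p := fun x _ => ∀ g : G, x * (g, g, g, g) * x⁻¹ * ((g, g, g, g) : Quad G)⁻¹ ∈ Mg G)
    ?_ ?_ ?_ ?_ hx
  · rintro q ⟨h, (rfl | rfl | rfl)⟩ g
    · have key : ((h, h, 1, 1) : Quad G) * (g, g, g, g) * (h, h, 1, 1)⁻¹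
          * ((g, g, g, g) : Quad G)⁻¹ = (⁅h, g⁆, ⁅h, g⁆, 1, 1) := by
        simp only [Prod.mk_mul_mk, Prod.inv_mk, Prod.mk.injEq, commutatorElement_def] <;>
          and_intros <;> group
      rw [key]
      exact (le_sup_left : Eg G ≤ Mg G) (mem_Eg_gen1 (comm_mem_G2 h g))
    · have key : ((h, 1, h, 1) : Quad G) * (g, g, g, g) * (h, 1, h, 1)⁻¹
          * ((g, g, g, g) : Quad G)⁻¹ = (⁅h, g⁆, 1, ⁅h, g⁆, 1) := by
        simp only [Prod.mk_mul_mk, Prod.inv_mk, Prod.mk.injEq, commutatorElement_def] <;>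
          and_intros <;> group
      rw [key]
      exact (le_sup_left : Eg G ≤ Mg G) (mem_Eg_gen2 (comm_mem_G2 h g))
    · have key : ((h, h, h, h) : Quad G) * (g, g, g, g) * (h, h, h, h)⁻¹
          * ((g, g, g, g) : Quad G)⁻¹ = (⁅h, g⁆, ⁅h, g⁆, ⁅h, g⁆, ⁅h, g⁆) := by
        simp only [Prod.mk_mul_mk, Prod.inv_mk, Prod.mk.injEq, commutatorElement_def] <;>
          and_intros <;> group
      rw [key]
      exact (le_sup_left : Eg G ≤ Mg G) (mem_Eg_gen3 (comm_mem_G2 h g))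
  · intro g
    have h : (1 : Quad G) * (g, g, g, g) * (1 : Quad G)⁻¹ * ((g, g, g, g) : Quad G)⁻¹ = 1 := by
      group
    rw [h]; exact one_mem _
  · intro x y _ _ ihx ihy g
    have key : (x * y) * (g, g, g, g) * (x * y)⁻¹ * ((g, g, g, g) : Quad G)⁻¹
        = x * (y * (g, g, g, g) * y⁻¹ * ((g, g, g, g) : Quad G)⁻¹) * x⁻¹
          * (x * (g, g, g, g) * x⁻¹ * ((g, g, g, g) : Quad G)⁻¹) := by group
    rw [key]
    exact mul_mem (normMg.conj_mem _ (ihy g) x) (ihx g)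
  · intro x _ ih g
    have key : x⁻¹ * (g, g, g, g) * (x⁻¹)⁻¹ * ((g, g, g, g) : Quad G)⁻¹
        = x⁻¹ * (x * (g, g, g, g) * x⁻¹ * ((g, g, g, g) : Quad G)⁻¹)⁻¹ * (x⁻¹)⁻¹ := by group
    rw [key]
    exact normMg.conj_mem _ (inv_mem (ih g)) x⁻¹

lemma conj_mem_Kg {x k : Quad G} (hx : x ∈ edgeGroup2 G) (hk : k ∈ Kg G) :
    x * k * x⁻¹ ∈ Kg G := by
  have hKDM : (Kg G : Set (Quad G)) = (Dg G : Set (Quad G)) * (Mg G : Set (Quad G)) :=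
    Subgroup.mul_normal (Dg G) (Mg G)
  rw [← SetLike.mem_coe, hKDM, Set.mem_mul] at hk
  obtain ⟨δ, hδ, m, hm, hkeq⟩ := hk
  obtain ⟨g, -, hg⟩ := hδ
  have hδg : δ = ((g, g, g, g) : Quad G) := hg.symm
  subst hδg
  rw [← hkeq]
  have key : x * ((g, g, g, g) * m) * x⁻¹
      = (x * (g, g, g, g) * x⁻¹ * ((g, g, g, g) : Quad G)⁻¹) * (g, g, g, g) * (x * m * x⁻¹) := by
    group
  rw [key]
  exact mul_mem
    (mul_mem ((le_sup_right : Mg G ≤ Kg G) (conj_diag_mem hx g))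
      ((le_sup_left : Dg G ≤ Kg G) (mem_Dg g)))
    ((le_sup_right : Mg G ≤ Kg G) (normMg.conj_mem _ hm x))

lemma Kg_le_E2 : Kg G ≤ edgeGroup2 G := by
  refine sup_le ?_ (sup_le ?_ ?_)
  · rintro _ ⟨g, -, rfl⟩; exact mem_E2_gen3 g
  · refine (Subgroup.closure_le _).mpr ?_
    rintro q ⟨u, _, (rfl | rfl | rfl)⟩
    exacts [mem_E2_gen1 u, mem_E2_gen2 u, mem_E2_gen3 u]
  · rintro ⟨a, b, c, d⟩ hp
    rw [mem_Ng_iff] at hp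
    obtain ⟨h1, h2, h3, h4⟩ := hp
    refine mem_E2_of a b c d ?_
    exact mul_mem (mul_mem (mul_mem (inv_mem (G3_le_G2 h3)) (G3_le_G2 h1))
      (inv_mem (G3_le_G2 h2))) (G3_le_G2 h4)


/-! ### faces of cubes -/

lemma insert3_zero (b u w : Bool) : insert3 0 b u w = ![b, u, w] := by simp [insert3]

lemma face_apply (x : Cube G) (b : Bool) :
    face x 0 b = (x ![b, false, false], x ![b, false, true], x ![b, true, false],
      x ![b, true, true]) := by
  simp [face, insert3_zero]

lemma lit_eq_iff (a b c : Bool) (η : Vtx) :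
    (![a, b, c] : Vtx) = η ↔ a = η 0 ∧ b = η 1 ∧ c = η 2 := by
  constructor
  · rintro rfl; refine ⟨by simp, by simp, by simp⟩
  · rintro ⟨h0, h1, h2⟩; funext i; fin_cases i
    · simpa using h0
    · simpa using h1
    · simpa using h2

lemma face_mul (x y : Cube G) (b : Bool) :
    face (x * y) 0 b = face x 0 b * face y 0 b := rfl

lemma face_one (b : Bool) : face (1 : Cube G) 0 b = 1 := rfl

lemma face_inv (x : Cube G) (b : Bool) : face x⁻¹ 0 b = (face x 0 b)⁻¹ := rfl

/-! ### the subgroup `S` -/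

def Sg (G : Type) [Group G] : Subgroup (Cube G) where
  carrier := {x | face x 0 false ∈ edgeGroup2 G ∧ face x 0 true ∈ edgeGroup2 G ∧
    face x 0 false * (face x 0 true)⁻¹ ∈ Kg G}
  one_mem' := ⟨one_mem _, one_mem _, by rw [face_one, face_one, inv_one, mul_one]; exact one_mem _⟩
  mul_mem' := by
    rintro x y ⟨hp, hq, hk⟩ ⟨hp', hq', hk'⟩
    refine ⟨by rw [face_mul]; exact mul_mem hp hp', by rw [face_mul]; exact mul_mem hq hq', ?_⟩
    rw [face_mul, face_mul]
    have key : (face x 0 false * face y 0 false) * (face x 0 true * face y 0 true)⁻¹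
        = face x 0 false * (face y 0 false * (face y 0 true)⁻¹) * (face x 0 false)⁻¹
          * (face x 0 false * (face x 0 true)⁻¹) := by group
    rw [key]
    exact mul_mem (conj_mem_Kg hp hk') hk
  inv_mem' := by
    rintro x ⟨hp, hq, hk⟩
    refine ⟨by rw [face_inv]; exact inv_mem hp, by rw [face_inv]; exact inv_mem hq, ?_⟩
    rw [face_inv, face_inv]
    have key : (face x 0 false)⁻¹ * ((face x 0 true)⁻¹)⁻¹
        = (face x 0 false)⁻¹ * (face x 0 false * (face x 0 true)⁻¹)⁻¹
          * ((face x 0 false)⁻¹)⁻¹ := by group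
    rw [key]
    exact conj_mem_Kg (inv_mem hp) (inv_mem hk)

lemma mem_Sg_iff {x : Cube G} : x ∈ Sg G ↔
    (face x 0 false ∈ edgeGroup2 G ∧ face x 0 true ∈ edgeGroup2 G ∧
      face x 0 false * (face x 0 true)⁻¹ ∈ Kg G) := Iff.rfl


lemma fin3_cases (i : Fin 3) : i = 0 ∨ i = 1 ∨ i = 2 := by revert i; decide

lemma faceGroup_le_Sg : faceGroup G ≤ Sg G := by
  refine (Subgroup.closure_le _).mpr ?_
  rintro x ⟨g, α, ⟨i, b, rfl⟩, rfl⟩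
  rw [SetLike.mem_coe, mem_Sg_iff]
  rcases fin3_cases i with rfl | rfl | rfl <;> cases b
  · -- i = 0, b = false
    rw [show face (cubeElt {v : Vtx | v 0 = false} g) 0 false = ((g,g,g,g) : Quad G) by
        simp [face_apply, cubeElt],
      show face (cubeElt {v : Vtx | v 0 = false} g) 0 true = (1 : Quad G) by
        simp [face_apply, cubeElt]]
    refine ⟨mem_E2_gen3 g, one_mem _, ?_⟩
    rw [inv_one, mul_one]
    exact (le_sup_left : Dg G ≤ Kg G) (mem_Dg g)
  · -- i = 0, b = true
    rw [show face (cubeElt {v : Vtx | v 0 = true} g) 0 false = (1 : Quad G) by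
        simp [face_apply, cubeElt],
      show face (cubeElt {v : Vtx | v 0 = true} g) 0 true = ((g,g,g,g) : Quad G) by
        simp [face_apply, cubeElt]]
    refine ⟨one_mem _, mem_E2_gen3 g, ?_⟩
    rw [one_mul]
    exact inv_mem ((le_sup_left : Dg G ≤ Kg G) (mem_Dg g))
  · -- i = 1, b = false
    rw [show face (cubeElt {v : Vtx | v 1 = false} g) 0 false = ((g,g,1,1) : Quad G) by
        simp [face_apply, cubeElt],
      show face (cubeElt {v : Vtx | v 1 = false} g) 0 true = ((g,g,1,1) : Quad G) by
        simp [face_apply, cubeElt]]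
    refine ⟨mem_E2_gen1 g, mem_E2_gen1 g, ?_⟩
    rw [mul_inv_cancel]
    exact one_mem _
  · -- i = 1, b = true
    rw [show face (cubeElt {v : Vtx | v 1 = true} g) 0 false = ((1,1,g,g) : Quad G) by
        simp [face_apply, cubeElt],
      show face (cubeElt {v : Vtx | v 1 = true} g) 0 true = ((1,1,g,g) : Quad G) by
        simp [face_apply, cubeElt]]
    refine ⟨mem_E2_0011 g, mem_E2_0011 g, ?_⟩
    rw [mul_inv_cancel]
    exact one_mem _
  · -- i = 2, b = false
    rw [show face (cubeElt {v : Vtx | v 2 = false} g) 0 false = ((g,1,g,1) : Quad G) by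
        simp [face_apply, cubeElt],
      show face (cubeElt {v : Vtx | v 2 = false} g) 0 true = ((g,1,g,1) : Quad G) by
        simp [face_apply, cubeElt]]
    refine ⟨mem_E2_gen2 g, mem_E2_gen2 g, ?_⟩
    rw [mul_inv_cancel]
    exact one_mem _
  · -- i = 2, b = true
    rw [show face (cubeElt {v : Vtx | v 2 = true} g) 0 false = ((1,g,1,g) : Quad G) by
        simp [face_apply, cubeElt],
      show face (cubeElt {v : Vtx | v 2 = true} g) 0 true = ((1,g,1,g) : Quad G) by
        simp [face_apply, cubeElt]]
    refine ⟨mem_E2_0101 g, mem_E2_0101 g, ?_⟩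
    rw [mul_inv_cancel]
    exact one_mem _


lemma eq_lit_iff (v : Vtx) (a b c : Bool) :
    v = ![a, b, c] ↔ v 0 = a ∧ v 1 = b ∧ v 2 = c := by
  constructor
  · rintro rfl; refine ⟨by simp, by simp, by simp⟩
  · rintro ⟨h0, h1, h2⟩; funext i; fin_cases i
    · simpa using h0
    · simpa using h1
    · simpa using h2

/-! ### `joinQuad` -/

lemma quadAt_mul (p q : Quad G) (u w : Bool) :
    quadAt (p * q) u w = quadAt p u w * quadAt q u w := by
  cases u <;> cases w <;> rfl

lemma quadAt_one (u w : Bool) : quadAt (1 : Quad G) u w = 1 := by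
  cases u <;> cases w <;> rfl

lemma joinQuad_mul (p q p' q' : Quad G) :
    joinQuad (p * p') (q * q') = joinQuad p q * joinQuad p' q' := by
  funext v
  by_cases h : v 0 = false <;> simp [joinQuad, h, quadAt_mul]

lemma joinQuad_one : joinQuad (1 : Quad G) 1 = 1 := by
  funext v
  by_cases h : v 0 = false <;> simp [joinQuad, h, quadAt_one]

lemma joinQuad_face (x : Cube G) : joinQuad (face x 0 false) (face x 0 true) = x := by
  funext v
  have hv : v = ![v 0, v 1, v 2] := by funext i; fin_cases i <;> rfl
  cases h0 : v 0 <;> cases h1 : v 1 <;> cases h2 : v 2 <;>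
    (rw [h0, h1, h2] at hv; conv_rhs => rw [hv]) <;>
    simp [joinQuad, quadAt, face_apply, h0, h1, h2]

def jdiag (G : Type) [Group G] : Quad G →* Cube G where
  toFun q := joinQuad q q
  map_one' := joinQuad_one
  map_mul' p q := joinQuad_mul p p q q

def jleft (G : Type) [Group G] : Quad G →* Cube G where
  toFun q := joinQuad q 1
  map_one' := joinQuad_one
  map_mul' p q := by
    show joinQuad (p * q) (1 : Quad G) = joinQuad p 1 * joinQuad q 1
    conv_lhs => rw [show (1 : Quad G) = 1 * 1 by rw [one_mul]]
    exact joinQuad_mul p 1 q 1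

lemma jdiag_mem {q : Quad G} (hq : q ∈ edgeGroup2 G) : joinQuad q q ∈ faceGroup G := by
  have hle : Subgroup.map (jdiag G) (edgeGroup2 G) ≤ faceGroup G := by
    rw [edgeGroup2, MonoidHom.map_closure]
    refine (Subgroup.closure_le _).mpr ?_
    rintro y ⟨q, ⟨g, (rfl | rfl | rfl)⟩, rfl⟩
    · have key : jdiag G ((g, g, 1, 1) : Quad G) = cubeElt {v : Vtx | v 1 = false} g := by
        funext v
        cases h1 : v 1 <;> cases h2 : v 2 <;>
          simp [jdiag, joinQuad, quadAt, cubeElt, h1, h2, ite_self]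
      rw [key]
      exact mem_faceGroup_of_face ⟨1, false, rfl⟩ g
    · have key : jdiag G ((g, 1, g, 1) : Quad G) = cubeElt {v : Vtx | v 2 = false} g := by
        funext v
        cases h1 : v 1 <;> cases h2 : v 2 <;>
          simp [jdiag, joinQuad, quadAt, cubeElt, h1, h2, ite_self]
      rw [key]
      exact mem_faceGroup_of_face ⟨2, false, rfl⟩ g
    · have key : jdiag G ((g, g, g, g) : Quad G)
          = cubeElt {v : Vtx | v 0 = false} g * cubeElt {v : Vtx | v 0 = true} g := by
        funext v
        cases h0 : v 0 <;> cases h1 : v 1 <;> cases h2 : v 2 <;>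
          simp [jdiag, joinQuad, quadAt, cubeElt, h0, h1, h2]
      rw [key]
      exact mul_mem (mem_faceGroup_of_face ⟨0, false, rfl⟩ g)
        (mem_faceGroup_of_face ⟨0, true, rfl⟩ g)
  exact hle ⟨q, hq, rfl⟩

lemma jleft_diag (g : G) :
    joinQuad ((g, g, g, g) : Quad G) 1 = cubeElt {v : Vtx | v 0 = false} g := by
  funext v
  cases h0 : v 0 <;> cases h1 : v 1 <;> cases h2 : v 2 <;>
    simp [joinQuad, quadAt, quadAt_one, cubeElt, h0, h1, h2]

lemma jleft_Eg {e : Quad G} (he : e ∈ Eg G) : joinQuad e 1 ∈ faceGroup G := by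
  have hle : Subgroup.map (jleft G) (Eg G) ≤ faceGroup G := by
    rw [Eg, edgeGroup2Of, MonoidHom.map_closure]
    refine (Subgroup.closure_le _).mpr ?_
    rintro y ⟨q, ⟨u, hu, (rfl | rfl | rfl)⟩, rfl⟩
    · have key : jleft G ((u, u, 1, 1) : Quad G)
          = cubeElt {v : Vtx | v 0 = false ∧ v 1 = false} u := by
        funext v
        cases h0 : v 0 <;> cases h1 : v 1 <;> cases h2 : v 2 <;>
          simp [jleft, joinQuad, quadAt, quadAt_one, cubeElt, h0, h1, h2]
      rw [key]
      exact edge_mem_faceGroup 0 1 false false hu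
    · have key : jleft G ((u, 1, u, 1) : Quad G)
          = cubeElt {v : Vtx | v 0 = false ∧ v 2 = false} u := by
        funext v
        cases h0 : v 0 <;> cases h1 : v 1 <;> cases h2 : v 2 <;>
          simp [jleft, joinQuad, quadAt, quadAt_one, cubeElt, h0, h1, h2]
      rw [key]
      exact edge_mem_faceGroup 0 2 false false hu
    · have key : jleft G ((u, u, u, u) : Quad G) = cubeElt {v : Vtx | v 0 = false} u :=
        jleft_diag u
      rw [key]
      exact mem_faceGroup_of_face ⟨0, false, rfl⟩ u
  exact hle ⟨e, he, rfl⟩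

lemma jleft_Ng {n : Quad G} (hn : n ∈ Ng G) : joinQuad n 1 ∈ faceGroup G := by
  obtain ⟨a, b, c, d⟩ := n
  rw [mem_Ng_iff] at hn
  obtain ⟨h1, h2, h3, h4⟩ := hn
  have key : joinQuad ((a, b, c, d) : Quad G) 1
      = cubeElt {(![false, false, false] : Vtx)} a * cubeElt {(![false, false, true] : Vtx)} b *
        cubeElt {(![false, true, false] : Vtx)} c * cubeElt {(![false, true, true] : Vtx)} d := by
    funext v
    cases h0 : v 0 <;> cases hb1 : v 1 <;> cases hb2 : v 2 <;>
      simp [joinQuad, quadAt, quadAt_one, cubeElt, Set.mem_singleton_iff, eq_lit_iff,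
        h0, hb1, hb2]
  rw [key]
  exact mul_mem (mul_mem (mul_mem (vertex_mem_faceGroup _ h1) (vertex_mem_faceGroup _ h2))
    (vertex_mem_faceGroup _ h3)) (vertex_mem_faceGroup _ h4)


lemma Sg_le_faceGroup : Sg G ≤ faceGroup G := by
  intro x hx
  obtain ⟨hp, hq, hk⟩ := hx
  have hx2 : x = joinQuad (face x 0 false * (face x 0 true)⁻¹) 1
      * joinQuad (face x 0 true) (face x 0 true) := by
    calc x = joinQuad (face x 0 false) (face x 0 true) := (joinQuad_face x).symm
      _ = joinQuad (face x 0 false * (face x 0 true)⁻¹ * face x 0 true)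
          (1 * face x 0 true) := by rw [inv_mul_cancel_right, one_mul]
      _ = _ := joinQuad_mul _ _ _ _
  rw [hx2]
  have hj : ∀ z w : Quad G, joinQuad (z * w) 1 = joinQuad z 1 * joinQuad w 1 := fun z w =>
    (jleft G).map_mul z w
  have hk' : face x 0 false * (face x 0 true)⁻¹
      ∈ (Dg G : Set (Quad G)) * (Eg G : Set (Quad G)) * (Ng G : Set (Quad G)) := by
    rw [← Kg_coe]; exact hk
  obtain ⟨de, hde, n, hn, hprod⟩ := hk'
  obtain ⟨δ, hδ, e, he, hde2⟩ := hde
  obtain ⟨g, -, hg⟩ := hδ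
  have hδg : δ = ((g, g, g, g) : Quad G) := hg.symm
  subst hδg
  rw [← hprod, ← hde2, hj, hj]
  refine mul_mem (mul_mem (mul_mem ?_ (jleft_Eg he)) (jleft_Ng hn)) (jdiag_mem hq)
  rw [jleft_diag]
  exact mem_faceGroup_of_face ⟨0, false, rfl⟩ g

lemma faceGroup_eq_Sg : faceGroup G = Sg G := le_antisymm faceGroup_le_Sg Sg_le_faceGroup

/-! ### single-vertex elements -/

lemma Kc_single {g : G} {p : Quad G} (hp : p ∈ Kc G)
    (hcase : p = ((g, 1, 1, 1) : Quad G) ∨ p = ((1, g, 1, 1) : Quad G)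
      ∨ p = ((1, 1, g, 1) : Quad G) ∨ p = ((1, 1, 1, g) : Quad G)) :
    g ∈ secondCommutator G := by
  rw [← QuotientGroup.eq_one_iff (N := secondCommutator G) g]
  rcases hcase with rfl | rfl | rfl | rfl <;>
    obtain ⟨u, v, hu, hv, h1, h2, h3⟩ := hp <;>
    dsimp only at h1 h2 h3 <;>
    simp only [QuotientGroup.mk_one, one_mul, mul_one] at h1 h2 h3
  · -- (g,1,1,1) : h1 : 1 = g*v, h2 : 1 = g*u, h3 : 1 = g*u*v
    rw [← h2, one_mul] at h3
    rw [← h3, mul_one] at h1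
    exact h1.symm
  · -- (1,g,1,1) : h1 : g = v, h2 : 1 = u, h3 : 1 = u*v
    rw [← h2, one_mul] at h3
    rw [h1, ← h3]
  · -- (1,1,g,1) : h1 : 1 = v, h2 : g = u, h3 : 1 = u*v
    rw [← h1, mul_one] at h3
    rw [h2, ← h3]
  · -- (1,1,1,g) : h1 : 1 = v, h2 : 1 = u, h3 : g = u*v
    rw [← h1, ← h2, mul_one] at h3
    exact h3

lemma vertex_mem_iff (g : G) (η : Vtx) :
    cubeElt {η} g ∈ faceGroup G ↔ g ∈ secondCommutator G := by
  constructor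
  · intro h
    rw [faceGroup_eq_Sg, mem_Sg_iff] at h
    obtain ⟨-, -, hk⟩ := h
    cases hb0 : η 0 <;> cases hb1 : η 1 <;> cases hb2 : η 2
    · have hpe : face (cubeElt ({η} : Set Vtx) g) 0 false = ((g, 1, 1, 1) : Quad G) := by
        simp [face_apply, cubeElt, Set.mem_singleton_iff, lit_eq_iff, hb0, hb1, hb2]
      have hqe : face (cubeElt ({η} : Set Vtx) g) 0 true = (1 : Quad G) := by
        simp [face_apply, cubeElt, Set.mem_singleton_iff, lit_eq_iff, hb0, hb1, hb2]
      rw [hpe, hqe, inv_one, mul_one] at hk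
      exact Kc_single (Kg_le_Kc hk) (Or.inl rfl)
    · have hpe : face (cubeElt ({η} : Set Vtx) g) 0 false = ((1, g, 1, 1) : Quad G) := by
        simp [face_apply, cubeElt, Set.mem_singleton_iff, lit_eq_iff, hb0, hb1, hb2]
      have hqe : face (cubeElt ({η} : Set Vtx) g) 0 true = (1 : Quad G) := by
        simp [face_apply, cubeElt, Set.mem_singleton_iff, lit_eq_iff, hb0, hb1, hb2]
      rw [hpe, hqe, inv_one, mul_one] at hk
      exact Kc_single (Kg_le_Kc hk) (Or.inr (Or.inl rfl))
    · have hpe : face (cubeElt ({η} : Set Vtx) g) 0 false = ((1, 1, g, 1) : Quad G) := by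
        simp [face_apply, cubeElt, Set.mem_singleton_iff, lit_eq_iff, hb0, hb1, hb2]
      have hqe : face (cubeElt ({η} : Set Vtx) g) 0 true = (1 : Quad G) := by
        simp [face_apply, cubeElt, Set.mem_singleton_iff, lit_eq_iff, hb0, hb1, hb2]
      rw [hpe, hqe, inv_one, mul_one] at hk
      exact Kc_single (Kg_le_Kc hk) (Or.inr (Or.inr (Or.inl rfl)))
    · have hpe : face (cubeElt ({η} : Set Vtx) g) 0 false = ((1, 1, 1, g) : Quad G) := by
        simp [face_apply, cubeElt, Set.mem_singleton_iff, lit_eq_iff, hb0, hb1, hb2]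
      have hqe : face (cubeElt ({η} : Set Vtx) g) 0 true = (1 : Quad G) := by
        simp [face_apply, cubeElt, Set.mem_singleton_iff, lit_eq_iff, hb0, hb1, hb2]
      rw [hpe, hqe, inv_one, mul_one] at hk
      exact Kc_single (Kg_le_Kc hk) (Or.inr (Or.inr (Or.inr rfl)))
    · have hpe : face (cubeElt ({η} : Set Vtx) g) 0 false = (1 : Quad G) := by
        simp [face_apply, cubeElt, Set.mem_singleton_iff, lit_eq_iff, hb0, hb1, hb2]
      have hqe : face (cubeElt ({η} : Set Vtx) g) 0 true = ((g, 1, 1, 1) : Quad G) := by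
        simp [face_apply, cubeElt, Set.mem_singleton_iff, lit_eq_iff, hb0, hb1, hb2]
      rw [hpe, hqe, one_mul] at hk
      replace hk := inv_mem hk
      rw [inv_inv] at hk
      exact Kc_single (Kg_le_Kc hk) (Or.inl rfl)
    · have hpe : face (cubeElt ({η} : Set Vtx) g) 0 false = (1 : Quad G) := by
        simp [face_apply, cubeElt, Set.mem_singleton_iff, lit_eq_iff, hb0, hb1, hb2]
      have hqe : face (cubeElt ({η} : Set Vtx) g) 0 true = ((1, g, 1, 1) : Quad G) := by
        simp [face_apply, cubeElt, Set.mem_singleton_iff, lit_eq_iff, hb0, hb1, hb2]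
      rw [hpe, hqe, one_mul] at hk
      replace hk := inv_mem hk
      rw [inv_inv] at hk
      exact Kc_single (Kg_le_Kc hk) (Or.inr (Or.inl rfl))
    · have hpe : face (cubeElt ({η} : Set Vtx) g) 0 false = (1 : Quad G) := by
        simp [face_apply, cubeElt, Set.mem_singleton_iff, lit_eq_iff, hb0, hb1, hb2]
      have hqe : face (cubeElt ({η} : Set Vtx) g) 0 true = ((1, 1, g, 1) : Quad G) := by
        simp [face_apply, cubeElt, Set.mem_singleton_iff, lit_eq_iff, hb0, hb1, hb2]
      rw [hpe, hqe, one_mul] at hk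
      replace hk := inv_mem hk
      rw [inv_inv] at hk
      exact Kc_single (Kg_le_Kc hk) (Or.inr (Or.inr (Or.inl rfl)))
    · have hpe : face (cubeElt ({η} : Set Vtx) g) 0 false = (1 : Quad G) := by
        simp [face_apply, cubeElt, Set.mem_singleton_iff, lit_eq_iff, hb0, hb1, hb2]
      have hqe : face (cubeElt ({η} : Set Vtx) g) 0 true = ((1, 1, 1, g) : Quad G) := by
        simp [face_apply, cubeElt, Set.mem_singleton_iff, lit_eq_iff, hb0, hb1, hb2]
      rw [hpe, hqe, one_mul] at hk
      replace hk := inv_mem hk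
      rw [inv_inv] at hk
      exact Kc_single (Kg_le_Kc hk) (Or.inr (Or.inr (Or.inr rfl)))
  · exact vertex_mem_faceGroup η


end S9

/-- (i) `G^{[3,2]} ⊇ G₂^{[3,1]} ⊇ G₃^{[3,3]}`; (ii) `g^{[3,{η}]} ∈ G^{[3,2]}`
iff `g ∈ G₃`; (iii) `K = G^{[2,2]}·G₂^{[2,1]}·G₃^{[2]}` is a normal subgroup of `G^{[2,1]}`
and `G^{[3,2]}` consists of the pairs of opposite faces `(g', g'') ∈ G^{[2,1]} × G^{[2,1]}`
with `g'·(g'')⁻¹ ∈ K`. -/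
theorem faceGroup_description (G : Type) [Group G] :
    (edgeGroup3 (commutator G) ≤ faceGroup G ∧
      Subgroup.map (diagHom3 G) (secondCommutator G) ≤ edgeGroup3 (commutator G)) ∧
    (∀ (g : G) (η : Vtx), cubeElt {η} g ∈ faceGroup G ↔ g ∈ secondCommutator G) ∧
    (∃ K : Subgroup (Quad G),
      (K : Set (Quad G)) =
        ((Subgroup.map (diagHom2 G) ⊤ : Subgroup (Quad G)) : Set (Quad G)) *
          (edgeGroup2Of (commutator G) : Set (Quad G)) *
          (quadSub (secondCommutator G) : Set (Quad G)) ∧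
      K ≤ edgeGroup2 G ∧
      (∀ x ∈ edgeGroup2 G, ∀ k ∈ K, x * k * x⁻¹ ∈ K) ∧
      (faceGroup G : Set (Cube G)) =
        {x : Cube G | face x 0 false ∈ edgeGroup2 G ∧ face x 0 true ∈ edgeGroup2 G ∧
          face x 0 false * (face x 0 true)⁻¹ ∈ (K : Set (Quad G))}) := by
  constructor
  · constructor
    · -- G₂^{[3,1]} ≤ G^{[3,2]}
      refine (Subgroup.closure_le _).mpr ?_
      rintro x ⟨u, hu, α, ⟨i, j, b, c, -, rfl⟩, rfl⟩
      exact S9.edge_mem_faceGroup i j b c hu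
    · -- diagonal of G₃ inside G₂^{[3,1]}
      rintro _ ⟨w, hw, rfl⟩
      have key : (diagHom3 G) w
          = cubeElt {v : Vtx | v 0 = false ∧ v 1 = false} w
            * cubeElt {v : Vtx | v 0 = false ∧ v 1 = true} w
            * cubeElt {v : Vtx | v 0 = true ∧ v 1 = false} w
            * cubeElt {v : Vtx | v 0 = true ∧ v 1 = true} w := by
        funext v
        cases h0 : v 0 <;> cases h1 : v 1 <;> simp [diagHom3, cubeElt, h0, h1]
      rw [key]
      have hmem : ∀ b c : Bool,
          cubeElt {v : Vtx | v 0 = b ∧ v 1 = c} w ∈ edgeGroup3 (commutator G) := fun b c =>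
        Subgroup.subset_closure ⟨w, S9.G3_le_G2 hw, _, ⟨0, 1, b, c, by decide, rfl⟩, rfl⟩
      exact mul_mem (mul_mem (mul_mem (hmem _ _) (hmem _ _)) (hmem _ _)) (hmem _ _)
  constructor
  · exact fun g η => S9.vertex_mem_iff g η
  · refine ⟨S9.Kg G, S9.Kg_coe, S9.Kg_le_E2, fun x hx k hk => S9.conj_mem_Kg hx hk, ?_⟩
    rw [S9.faceGroup_eq_Sg]
    rfl

end HK
end

section
/- Let G be a group, let 𝒫 = G^{[2,1]} and 𝒬 = G^{[3,2]}. Then (𝒫,𝒬) is a weak parallelepiped structure on G, and this structure is strong if and only if G is 2-step nilpotent (i.e. G₃ = {1}). -/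
open scoped Pointwise

namespace HK

variable {X Y : Type}

section AuxProofs

open scoped commutatorElement

variable {G : Type} [Group G]

private lemma mem_comm_iff {x : G} : x ∈ commutator G ↔ Abelianization.of x = 1 :=
  (QuotientGroup.eq_one_iff x).symm

private def abQuad (G : Type) [Group G] : Quad G →* Abelianization G where
  toFun q := Abelianization.of q.1 * (Abelianization.of q.2.1)⁻¹ *
    ((Abelianization.of q.2.2.1)⁻¹ * Abelianization.of q.2.2.2)
  map_one' := by simp
  map_mul' x y := by
    obtain ⟨a, b, c, d⟩ := x; obtain ⟨a', b', c', d'⟩ := y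
    simp only [Prod.mk_mul_mk, map_mul, mul_inv]
    simp [mul_comm, mul_left_comm, mul_assoc]

private lemma egen1 (g : G) : ((g, g, 1, 1) : Quad G) ∈ edgeGroup2 G :=
  Subgroup.subset_closure ⟨g, Or.inl rfl⟩
private lemma egen2 (g : G) : ((g, 1, g, 1) : Quad G) ∈ edgeGroup2 G :=
  Subgroup.subset_closure ⟨g, Or.inr (Or.inl rfl)⟩
private lemma egen3 (g : G) : ((g, g, g, g) : Quad G) ∈ edgeGroup2 G :=
  Subgroup.subset_closure ⟨g, Or.inr (Or.inr rfl)⟩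

private def inj4 (G : Type) [Group G] : G →* Quad G where
  toFun t := (1, 1, 1, t)
  map_one' := rfl
  map_mul' x y := by simp [Prod.ext_iff]

private lemma corner_mem {h : G} (hh : h ∈ commutator G) :
    ((1, 1, 1, h) : Quad G) ∈ edgeGroup2 G := by
  have key : ∀ t ∈ commutator G, ((1, 1, 1, t) : Quad G) ∈ edgeGroup2 G := by
    have hle : commutator G ≤ Subgroup.comap (inj4 G) (edgeGroup2 G) := by
      rw [commutator_def]
      refine Subgroup.commutator_le.mpr fun g _ k _ => ?_
      rw [Subgroup.mem_comap]
      show ((1, 1, 1, ⁅g, k⁆) : Quad G) ∈ edgeGroup2 G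
      have hA : ((⁅g, k⁆, 1, 1, 1) : Quad G) ∈ edgeGroup2 G := by
        have e : ((⁅g, k⁆, 1, 1, 1) : Quad G) = ⁅((g, 1, g, 1) : Quad G), ((k, k, 1, 1) : Quad G)⁆ := by
          simp only [commutatorElement_def, Prod.mk_mul_mk, Prod.inv_mk, Prod.mk.injEq]
          refine ⟨by group, by group, by group, by group⟩
        rw [e, commutatorElement_def]
        exact mul_mem (mul_mem (mul_mem (egen2 g) (egen1 k)) (inv_mem (egen2 g)))
          (inv_mem (egen1 k))
      have e2 : ((1, 1, 1, ⁅g, k⁆⁻¹) : Quad G) =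
          ((⁅g, k⁆, 1, 1, 1) : Quad G)⁻¹ *
            ((⁅g, k⁆, ⁅g, k⁆, 1, 1) * ((⁅g, k⁆, 1, ⁅g, k⁆, 1) * (⁅g, k⁆, ⁅g, k⁆, ⁅g, k⁆, ⁅g, k⁆)⁻¹)) := by
        simp only [Prod.mk_mul_mk, Prod.inv_mk, Prod.mk.injEq]
        refine ⟨by group, by group, by group, by group⟩
      have h2 : ((1, 1, 1, ⁅g, k⁆⁻¹) : Quad G) ∈ edgeGroup2 G := by
        rw [e2]
        exact mul_mem (inv_mem hA) (mul_mem (egen1 _) (mul_mem (egen2 _) (inv_mem (egen3 _))))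
      have e3 : ((1, 1, 1, ⁅g, k⁆) : Quad G) = ((1, 1, 1, ⁅g, k⁆⁻¹) : Quad G)⁻¹ := by
        simp only [Prod.inv_mk, Prod.mk.injEq]
        refine ⟨by group, by group, by group, by group⟩
      rw [e3]; exact inv_mem h2
    exact fun t ht => hle ht
  exact key h hh

theorem mem_edgeGroup2_iff {a b c d : G} :
    (a, b, c, d) ∈ edgeGroup2 G ↔ ∃ h ∈ commutator G, d = c * a⁻¹ * b * h := by
  constructor
  · intro hm
    have hker : edgeGroup2 G ≤ (abQuad G).ker := by
      rw [edgeGroup2]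
      refine (Subgroup.closure_le _).mpr ?_
      rintro q ⟨g, (rfl | rfl | rfl)⟩ <;> simp [MonoidHom.mem_ker, abQuad]
    have h1 : Abelianization.of a * (Abelianization.of b)⁻¹ *
        ((Abelianization.of c)⁻¹ * Abelianization.of d) = 1 := hker hm
    refine ⟨b⁻¹ * (a * (c⁻¹ * d)), ?_, by group⟩
    rw [mem_comm_iff]
    simp only [map_mul, map_inv]
    rw [← h1]
    simp [mul_comm, mul_left_comm, mul_assoc]
  · rintro ⟨h, hh, rfl⟩
    have e : ((a, b, c, c * a⁻¹ * b * h) : Quad G) =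
        (b * (c * a⁻¹ * b)⁻¹, b * (c * a⁻¹ * b)⁻¹, 1, 1) *
          ((c * (c * a⁻¹ * b)⁻¹, 1, c * (c * a⁻¹ * b)⁻¹, 1) *
            ((c * a⁻¹ * b, c * a⁻¹ * b, c * a⁻¹ * b, c * a⁻¹ * b) * (1, 1, 1, h))) := by
      simp only [Prod.mk_mul_mk, Prod.mk.injEq]
      refine ⟨by group, by group, by group, by group⟩
    rw [e]
    exact mul_mem (egen1 _) (mul_mem (egen2 _) (mul_mem (egen3 _) (corner_mem hh)))


private lemma P_refl (a b : G) : (a, b, a, b) ∈ edgeGroup2 G :=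
  mem_edgeGroup2_iff.mpr ⟨1, one_mem _, by group⟩

private lemma P_symm {a b c d : G} (h : (a, b, c, d) ∈ edgeGroup2 G) :
    (c, d, a, b) ∈ edgeGroup2 G := by
  obtain ⟨h₀, hh, rfl⟩ := mem_edgeGroup2_iff.mp h
  exact mem_edgeGroup2_iff.mpr ⟨h₀⁻¹, inv_mem hh, by group⟩

private lemma P_trans {a b c d e f : G} (h1 : (a, b, c, d) ∈ edgeGroup2 G)
    (h2 : (c, d, e, f) ∈ edgeGroup2 G) : (a, b, e, f) ∈ edgeGroup2 G := by
  obtain ⟨h₀, hh, rfl⟩ := mem_edgeGroup2_iff.mp h1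
  obtain ⟨h₁, hh1, rfl⟩ := mem_edgeGroup2_iff.mp h2
  exact mem_edgeGroup2_iff.mpr ⟨h₀ * h₁, mul_mem hh hh1, by group⟩

private lemma P_mid {a b c d : G} (h : (a, b, c, d) ∈ edgeGroup2 G) :
    (a, c, b, d) ∈ edgeGroup2 G := by
  obtain ⟨h₀, hh, rfl⟩ := mem_edgeGroup2_iff.mp h
  refine mem_edgeGroup2_iff.mpr ⟨c⁻¹ * a * b⁻¹ * (c * a⁻¹ * b) * h₀, ?_, by group⟩
  refine mul_mem ?_ hh
  have e : c⁻¹ * a * b⁻¹ * (c * a⁻¹ * b) = ⁅c⁻¹ * a, b⁻¹ * c⁆ := by group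
  rw [e, commutator_def]
  exact Subgroup.commutator_mem_commutator (Subgroup.mem_top _) (Subgroup.mem_top _)

private lemma P_complete (a b c : G) : (a, b, c, c * a⁻¹ * b) ∈ edgeGroup2 G :=
  mem_edgeGroup2_iff.mpr ⟨1, one_mem _, by group⟩


-- ## vertex helpers
private def v3 (p q r : Bool) : Vtx := ![p, q, r]

@[simp] private lemma v3_zero (p q r : Bool) : v3 p q r 0 = p := rfl
@[simp] private lemma v3_one (p q r : Bool) : v3 p q r 1 = q := rfl
@[simp] private lemma v3_two (p q r : Bool) : v3 p q r 2 = r := rfl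

private lemma vtx_eq (v : Vtx) : v = v3 (v 0) (v 1) (v 2) := by
  funext i; fin_cases i <;> rfl

private lemma cube_ext {x y : Cube G} (h : ∀ p q r, x (v3 p q r) = y (v3 p q r)) : x = y := by
  funext v; rw [vtx_eq v]; exact h _ _ _

-- ## cubeElt basics
private noncomputable def cubeEltHom (α : Set Vtx) : G →* Cube G where
  toFun := cubeElt α
  map_one' := by funext v; simp [cubeElt]
  map_mul' g h := by funext v; by_cases hv : v ∈ α <;> simp [cubeElt, hv]

private lemma cubeElt_mul (α : Set Vtx) (g h : G) :
    cubeElt α g * cubeElt α h = cubeElt α (g * h) := ((cubeEltHom α).map_mul g h).symm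

private lemma cubeElt_inv (α : Set Vtx) (g : G) :
    (cubeElt α g)⁻¹ = cubeElt α g⁻¹ := ((cubeEltHom α).map_inv g).symm

private lemma cubeElt_commutator (α β : Set Vtx) (g h : G) :
    cubeElt (α ∩ β) ⁅g, h⁆ = ⁅cubeElt α g, cubeElt β h⁆ := by
  funext v
  by_cases h1 : v ∈ α <;> by_cases h2 : v ∈ β <;>
    simp [cubeElt, commutatorElement_def, h1, h2, Set.mem_inter_iff, Pi.mul_apply, Pi.inv_apply]

private lemma faceCube_mem (i : Fin 3) (b : Bool) (g : G) :
    cubeElt {v : Vtx | v i = b} g ∈ faceGroup G :=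
  Subgroup.subset_closure ⟨g, _, ⟨i, b, rfl⟩, rfl⟩

private lemma commutator_cube_mem {B : Subgroup G} {α β : Set Vtx}
    (hα : ∀ g : G, cubeElt α g ∈ faceGroup G)
    (hβ : ∀ h ∈ B, cubeElt β h ∈ faceGroup G)
    {t : G} (ht : t ∈ ⁅(⊤ : Subgroup G), B⁆) : cubeElt (α ∩ β) t ∈ faceGroup G := by
  have hle : ⁅(⊤ : Subgroup G), B⁆ ≤ Subgroup.comap (cubeEltHom (α ∩ β)) (faceGroup G) := by
    refine Subgroup.commutator_le.mpr fun g _ k hk => ?_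
    rw [Subgroup.mem_comap]
    show cubeElt (α ∩ β) ⁅g, k⁆ ∈ faceGroup G
    rw [cubeElt_commutator, commutatorElement_def]
    exact mul_mem (mul_mem (mul_mem (hα g) (hβ k hk)) (inv_mem (hα g))) (inv_mem (hβ k hk))
  exact hle ht

private lemma edgeCube_mem (i j : Fin 3) (b c : Bool) {h : G} (hh : h ∈ commutator G) :
    cubeElt ({v : Vtx | v i = b} ∩ {v : Vtx | v j = c}) h ∈ faceGroup G := by
  refine commutator_cube_mem (B := ⊤) (faceCube_mem i b) (fun k _ => faceCube_mem j c k) ?_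
  rwa [commutator_def] at hh

private lemma vertexCube_mem {t : G} (ht : t ∈ secondCommutator G) :
    cubeElt ({v : Vtx | v 2 = true} ∩ ({v : Vtx | v 0 = true} ∩ {v : Vtx | v 1 = true})) t ∈
      faceGroup G :=
  commutator_cube_mem (faceCube_mem 2 true) (fun k hk => edgeCube_mem 0 1 true true hk) ht

private lemma const_mem (g : G) : (fun _ => g : Cube G) ∈ faceGroup G := by
  have e : (fun _ => g : Cube G) =
      cubeElt {v : Vtx | v 0 = false} g * cubeElt {v : Vtx | v 0 = true} g := by
    funext v; cases hb : v 0 <;> simp [cubeElt, hb, Pi.mul_apply]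
  rw [e]; exact mul_mem (faceCube_mem 0 false g) (faceCube_mem 0 true g)

-- ## faces of elements of faceGroup
private lemma face_mul (x y : Cube G) (i : Fin 3) (b : Bool) :
    face (x * y) i b = face x i b * face y i b := rfl

private lemma face_inv (x : Cube G) (i : Fin 3) (b : Bool) :
    face x⁻¹ i b = (face x i b)⁻¹ := rfl

private lemma face_one (i : Fin 3) (b : Bool) : face (1 : Cube G) i b = 1 := rfl

private lemma faces_mem {x : Cube G} (hx : x ∈ faceGroup G) (i : Fin 3) (b : Bool) :
    face x i b ∈ edgeGroup2 G := by
  induction hx using Subgroup.closure_induction with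
  | mem y hy =>
      obtain ⟨g, α, ⟨j, c, rfl⟩, rfl⟩ := hy
      fin_cases i <;> fin_cases j <;> cases b <;> cases c <;>
        · simp only [face, insert3, cubeElt]
          simp
          exact mem_edgeGroup2_iff.mpr ⟨1, one_mem _, by group⟩
  | one => rw [face_one]; exact one_mem _
  | mul x y hx hy ihx ihy => rw [face_mul]; exact mul_mem ihx ihy
  | inv x hx ihx => rw [face_inv]; exact inv_mem ihx

-- ## invariance under precomposition
private lemma comp_mem (e : Vtx → Vtx)
    (he : ∀ (j : Fin 3) (c : Bool), ∃ (j' : Fin 3) (c' : Bool),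
      ∀ v : Vtx, (e v) j = c ↔ v j' = c') {x : Cube G} (hx : x ∈ faceGroup G) :
    (fun v => x (e v)) ∈ faceGroup G := by
  induction hx using Subgroup.closure_induction with
  | mem y hy =>
      obtain ⟨g, α, ⟨j, c, rfl⟩, rfl⟩ := hy
      obtain ⟨j', c', h⟩ := he j c
      have e1 : (fun v => cubeElt {w : Vtx | w j = c} g (e v)) =
          cubeElt {w : Vtx | w j' = c'} g := by
        funext v
        by_cases hv : v j' = c' <;> simp [cubeElt, hv, h v]
      rw [e1]; exact faceCube_mem j' c' g
  | one => exact one_mem _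
  | mul x y hx hy ihx ihy => exact mul_mem ihx ihy
  | inv x hx ihx => exact inv_mem ihx

private lemma sym_mem (σ : Equiv.Perm (Fin 3)) (c : Vtx) {x : Cube G}
    (hx : x ∈ faceGroup G) : (fun v => x (cubeSym σ c v)) ∈ faceGroup G := by
  refine comp_mem (cubeSym σ c) (fun j b => ⟨σ j, xor b (c j), fun v => ?_⟩) hx
  simp only [cubeSym]
  cases hv : v (σ j) <;> cases hc : c j <;> cases b <;> simp

-- ## joinQuad lemmas
private lemma quadAt_mul (p q : Quad G) (y z : Bool) :
    quadAt (p * q) y z = quadAt p y z * quadAt q y z := by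
  cases y <;> cases z <;> rfl

private lemma quadAt_inv (p : Quad G) (y z : Bool) :
    quadAt p⁻¹ y z = (quadAt p y z)⁻¹ := by
  cases y <;> cases z <;> rfl

private lemma quadAt_one (y z : Bool) : quadAt (1 : Quad G) y z = 1 := by
  cases y <;> cases z <;> rfl

private lemma joinQuad_mul (p q p' q' : Quad G) :
    joinQuad (p * p') (q * q') = joinQuad p q * joinQuad p' q' := by
  funext v
  by_cases hv : v 0 = false <;> simp [joinQuad, hv, Pi.mul_apply, quadAt_mul]

private lemma joinQuad_inv (p q : Quad G) :
    joinQuad p⁻¹ q⁻¹ = (joinQuad p q)⁻¹ := by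
  funext v
  by_cases hv : v 0 = false <;> simp [joinQuad, hv, Pi.inv_apply, quadAt_inv]

private lemma joinQuad_one : joinQuad (1 : Quad G) 1 = 1 := by
  funext v
  by_cases hv : v 0 = false <;> simp [joinQuad, hv, quadAt_one, Pi.one_apply]

private lemma joinQuad_self_mem {p : Quad G} (hp : p ∈ edgeGroup2 G) :
    joinQuad p p ∈ faceGroup G := by
  induction hp using Subgroup.closure_induction with
  | mem q hq =>
      obtain ⟨g, (rfl | rfl | rfl)⟩ := hq
      · have e : joinQuad ((g, g, 1, 1) : Quad G) (g, g, 1, 1) =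
            cubeElt {v : Vtx | v 1 = false} g := by
          funext v
          cases h1 : v 1 <;> cases h2 : v 2 <;>
            by_cases hv : v 0 = false <;> simp [joinQuad, cubeElt, quadAt, h1, h2, hv]
        rw [e]; exact faceCube_mem 1 false g
      · have e : joinQuad ((g, 1, g, 1) : Quad G) (g, 1, g, 1) =
            cubeElt {v : Vtx | v 2 = false} g := by
          funext v
          cases h1 : v 1 <;> cases h2 : v 2 <;>
            by_cases hv : v 0 = false <;> simp [joinQuad, cubeElt, quadAt, h1, h2, hv]
        rw [e]; exact faceCube_mem 2 false g
      · have e : joinQuad ((g, g, g, g) : Quad G) (g, g, g, g) = (fun _ => g : Cube G) := by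
          funext v
          cases h1 : v 1 <;> cases h2 : v 2 <;>
            by_cases hv : v 0 = false <;> simp [joinQuad, cubeElt, quadAt, h1, h2, hv]
        rw [e]; exact const_mem g
  | one => rw [joinQuad_one]; exact one_mem _
  | mul x y hx hy ihx ihy => rw [joinQuad_mul]; exact mul_mem ihx ihy
  | inv x hx ihx => rw [joinQuad_inv]; exact inv_mem ihx

private lemma join_symm {p q : Quad G} (h : joinQuad p q ∈ faceGroup G) :
    joinQuad q p ∈ faceGroup G := by
  have h2 := sym_mem 1 (v3 true false false) h
  have e : (fun v => joinQuad p q (cubeSym 1 (v3 true false false) v)) = joinQuad q p := by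
    funext v
    have h0 : cubeSym 1 (v3 true false false) v 0 = !(v 0) := by
      simp [cubeSym, v3]
    have h1 : cubeSym 1 (v3 true false false) v 1 = v 1 := by
      simp [cubeSym, v3]
    have hh2 : cubeSym 1 (v3 true false false) v 2 = v 2 := by
      simp [cubeSym, v3]
    cases hv : v 0 <;> simp [joinQuad, h0, h1, hh2, hv]
  rwa [e] at h2

private lemma face_join_top (p q : Quad G) : face (joinQuad p q) 0 true = q := by
  obtain ⟨a, b, c, d⟩ := q
  rfl

private lemma join_trans {p q r : Quad G} (h1 : joinQuad p q ∈ faceGroup G)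
    (h2 : joinQuad q r ∈ faceGroup G) : joinQuad p r ∈ faceGroup G := by
  have hq : q ∈ edgeGroup2 G := by
    have := faces_mem h1 0 true
    rwa [face_join_top] at this
  have e : joinQuad p r = joinQuad p q * (joinQuad q q)⁻¹ * joinQuad q r := by
    funext v
    by_cases hv : v 0 = false <;>
      simp [joinQuad, hv, Pi.mul_apply, Pi.inv_apply] <;> group
  rw [e]
  exact mul_mem (mul_mem h1 (inv_mem (joinQuad_self_mem hq))) h2

private lemma join_exists (x000 x001 x010 x011 x100 x101 x110 : G)
    (H1 : (x000, x001, x010, x011) ∈ edgeGroup2 G)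
    (H2 : (x000, x010, x100, x110) ∈ edgeGroup2 G)
    (H3 : (x000, x001, x100, x101) ∈ edgeGroup2 G) :
    ∃ x111, joinQuad (x000, x001, x010, x011) (x100, x101, x110, x111) ∈ faceGroup G := by
  obtain ⟨h₁, hc₁, e₁⟩ := mem_edgeGroup2_iff.mp H1
  obtain ⟨h₂, hc₂, e₂⟩ := mem_edgeGroup2_iff.mp H2
  obtain ⟨h₃, hc₃, e₃⟩ := mem_edgeGroup2_iff.mp H3
  refine ⟨x100 * x000⁻¹ * x010 * x000⁻¹ * x001 * h₁ * h₂ * h₃, ?_⟩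
  have e : joinQuad (x000, x001, x010, x011)
      (x100, x101, x110, x100 * x000⁻¹ * x010 * x000⁻¹ * x001 * h₁ * h₂ * h₃) =
      (fun _ => x000 : Cube G) * (cubeElt {v : Vtx | v 0 = true} (x000⁻¹ * x100) *
      (cubeElt {v : Vtx | v 1 = true} (x000⁻¹ * x010) *
      (cubeElt {v : Vtx | v 2 = true} (x000⁻¹ * x001) *
      (cubeElt ({v : Vtx | v 1 = true} ∩ {v : Vtx | v 2 = true}) h₁ *
      (cubeElt ({v : Vtx | v 0 = true} ∩ {v : Vtx | v 1 = true}) h₂ *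
       cubeElt ({v : Vtx | v 0 = true} ∩ {v : Vtx | v 2 = true}) h₃))))) := by
    refine cube_ext fun p q r => ?_
    cases p <;> cases q <;> cases r <;>
      simp [joinQuad, quadAt, cubeElt, v3, Pi.mul_apply] <;>
      (try rw [e₁]) <;> (try rw [e₂]) <;> (try rw [e₃]) <;> group
  rw [e]
  exact mul_mem (const_mem _) (mul_mem (faceCube_mem 0 true _) (mul_mem (faceCube_mem 1 true _)
    (mul_mem (faceCube_mem 2 true _) (mul_mem (edgeCube_mem 1 2 true true hc₁)
      (mul_mem (edgeCube_mem 0 1 true true hc₂) (edgeCube_mem 0 2 true true hc₃))))))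

-- ## two-step nilpotent commutator calculus
section TwoStep
variable (Hc : ∀ u v w : G, w * ⁅u, v⁆ = ⁅u, v⁆ * w)

private lemma cmul {x y : G} (mx : ∀ w, w * x = x * w) (my : ∀ w, w * y = y * w) :
    ∀ w : G, w * (x * y) = x * y * w := fun w => by
  rw [← mul_assoc, mx w, mul_assoc, my w, ← mul_assoc]

private lemma pull {x : G} (mx : ∀ w, w * x = x * w) (u v : G) :
    u * (x * v) = x * (u * v) := by
  rw [← mul_assoc, mx u, mul_assoc]

include Hc

private lemma swap' (u v : G) : u * v = v * u * ⁅u, v⁆ := by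
  rw [Hc u v (v * u)]; group

private lemma comm_mul (u v w : G) : ⁅u * v, w⁆ = ⁅u, w⁆ * ⁅v, w⁆ := by
  have h1 : ⁅u * v, w⁆ = u * ⁅v, w⁆ * u⁻¹ * ⁅u, w⁆ := by group
  rw [h1, Hc v w u, mul_inv_cancel_right]
  exact Hc u w ⁅v, w⁆

private lemma comm_inv_left' (u w : G) : ⁅u⁻¹, w⁆ = ⁅u, w⁆⁻¹ := by
  have h := comm_mul Hc u u⁻¹ w
  rw [mul_inv_cancel, commutatorElement_one_left] at h
  exact (inv_eq_of_mul_eq_one_right h.symm).symm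

private lemma comm_inv_right' (u w : G) : ⁅u, w⁻¹⁆ = ⁅u, w⁆⁻¹ := by
  rw [← commutatorElement_inv, comm_inv_left' Hc, inv_inv]
  exact (commutatorElement_inv u w).symm

private lemma comm_inv_inv (u w : G) : ⁅u⁻¹, w⁻¹⁆ = ⁅u, w⁆ := by
  rw [comm_inv_left' Hc, comm_inv_right' Hc, inv_inv]

private lemma zswap2 (u g : G) : ⁅g⁻¹, u⁻¹⁆ = ⁅u, g⁆⁻¹ := by
  rw [comm_inv_right' Hc, comm_inv_left' Hc, inv_inv, ← commutatorElement_inv]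

private lemma conj' (u g : G) : g⁻¹ * (u * g) = u * ⁅u, g⁆ := by
  rw [swap' Hc u g]; group

end TwoStep

-- ## the normal-form predicate
private def NP (a b c d p q r s : G) : Prop :=
  ∃ h₁ h₂ h₃ : G, (∀ w, w * h₁ = h₁ * w) ∧ (∀ w, w * h₂ = h₂ * w) ∧ (∀ w, w * h₃ = h₃ * w) ∧
    p = c * a⁻¹ * b * h₁ ∧ q = d * a⁻¹ * c * h₂ ∧ r = d * a⁻¹ * b * h₃ ∧
    s = d * a⁻¹ * c * (a⁻¹ * b) * (h₁ * (h₂ * h₃))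

section Steps
variable (Hc : ∀ u v w : G, w * ⁅u, v⁆ = ⁅u, v⁆ * w)
include Hc

private lemma L2t {a b c d p q r s : G} (g : G) (h : NP a b c d p q r s) :
    NP a (b * g) c d (p * g) q (r * g) (s * g) := by
  obtain ⟨h₁, h₂, h₃, m₁, m₂, m₃, rfl, rfl, rfl, rfl⟩ := h
  have mH := cmul m₁ (cmul m₂ m₃)
  refine ⟨h₁, h₂, h₃, m₁, m₂, m₃, ?_, rfl, ?_, ?_⟩
  · rw [mul_assoc, ← m₁ g]; group
  · rw [mul_assoc, ← m₃ g]; group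
  · rw [mul_assoc, ← mH g]; group

private lemma L2f {a b c d p q r s : G} (g : G) (h : NP a b c d p q r s) :
    NP (a * g) b (c * g) (d * g) p (q * g) r s := by
  obtain ⟨h₁, h₂, h₃, m₁, m₂, m₃, rfl, rfl, rfl, rfl⟩ := h
  refine ⟨h₁, h₂, h₃, m₁, m₂, m₃, by group, ?_, by group, by group⟩
  · rw [mul_assoc, ← m₂ g]; group

private lemma L1t {a b c d p q r s : G} (g : G) (h : NP a b c d p q r s) :
    NP a b (c * g) d (p * g) (q * g) r (s * g) := by
  obtain ⟨h₁, h₂, h₃, m₁, m₂, m₃, rfl, rfl, rfl, rfl⟩ := h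
  have mz : ∀ w : G, w * ⁅b⁻¹ * a, g⁻¹⁆ = ⁅b⁻¹ * a, g⁻¹⁆ * w := fun w => Hc _ _ w
  have mH := cmul m₁ (cmul m₂ m₃)
  refine ⟨⁅b⁻¹ * a, g⁻¹⁆ * h₁, h₂, h₃, cmul mz m₁, m₂, m₃, ?_, ?_, rfl, ?_⟩
  · rw [mul_assoc, ← m₁ g, commutatorElement_def]; group
  · rw [mul_assoc, ← m₂ g]; group
  · rw [mul_assoc, ← mH g, commutatorElement_def]; group

private lemma L1f {a b c d p q r s : G} (g : G) (h : NP a b c d p q r s) :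
    NP (a * g) (b * g) c (d * g) p q (r * g) s := by
  obtain ⟨h₁, h₂, h₃, m₁, m₂, m₃, rfl, rfl, rfl, rfl⟩ := h
  have mz : ∀ w : G, w * ⁅g⁻¹, b⁻¹ * a⁆ = ⁅g⁻¹, b⁻¹ * a⁆ * w := fun w => Hc _ _ w
  refine ⟨⁅g⁻¹, b⁻¹ * a⁆ * h₁, h₂, h₃, cmul mz m₁, m₂, m₃, ?_, by group, ?_, ?_⟩
  · rw [commutatorElement_def]; group
  · rw [mul_assoc, ← m₃ g]; group
  · rw [commutatorElement_def]; group

private lemma L0t {a b c d p q r s : G} (g : G) (h : NP a b c d p q r s) :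
    NP a b c (d * g) p (q * g) (r * g) (s * g) := by
  obtain ⟨h₁, h₂, h₃, m₁, m₂, m₃, rfl, rfl, rfl, rfl⟩ := h
  have mz₂ : ∀ w : G, w * ⁅c⁻¹ * a, g⁻¹⁆ = ⁅c⁻¹ * a, g⁻¹⁆ * w := fun w => Hc _ _ w
  have mz₃ : ∀ w : G, w * ⁅b⁻¹ * a, g⁻¹⁆ = ⁅b⁻¹ * a, g⁻¹⁆ * w := fun w => Hc _ _ w
  have mH := cmul m₁ (cmul m₂ m₃)
  refine ⟨h₁, h₂ * ⁅c⁻¹ * a, g⁻¹⁆, h₃ * ⁅b⁻¹ * a, g⁻¹⁆, m₁, cmul m₂ mz₂, cmul m₃ mz₃,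
    rfl, ?_, ?_, ?_⟩
  · rw [mul_assoc, ← m₂ g, Hc (c⁻¹ * a) g⁻¹ h₂, commutatorElement_def]; group
  · rw [mul_assoc, ← m₃ g, Hc (b⁻¹ * a) g⁻¹ h₃, commutatorElement_def]; group
  · -- hard case
    have tail : h₁ * ((h₂ * ⁅c⁻¹ * a, g⁻¹⁆) * (h₃ * ⁅b⁻¹ * a, g⁻¹⁆)) =
        ⁅c⁻¹ * a, g⁻¹⁆ * (⁅b⁻¹ * a, g⁻¹⁆ * (h₁ * (h₂ * h₃))) := by
      rw [mul_assoc h₂ _ _, pull mz₂ h₂ _, ← mul_assoc h₂ h₃ _,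
        Hc (b⁻¹ * a) g⁻¹ (h₂ * h₃), pull mz₂ h₁ _, pull mz₃ h₁ _]
    rw [tail, mul_assoc _ (h₁ * (h₂ * h₃)) g, ← mH g]
    have z2 : (⁅c⁻¹ * a, g⁻¹⁆ : G) = ⁅a⁻¹ * c, g⁆ := by
      rw [show (c⁻¹ * a : G) = (a⁻¹ * c)⁻¹ from by group]
      exact comm_inv_inv Hc _ _
    have z3 : (⁅b⁻¹ * a, g⁻¹⁆ : G) = ⁅a⁻¹ * b, g⁆ := by
      rw [show (b⁻¹ * a : G) = (a⁻¹ * b)⁻¹ from by group]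
      exact comm_inv_inv Hc _ _
    rw [z2, z3, ← mul_assoc _ g (h₁ * (h₂ * h₃)),
      ← mul_assoc (⁅a⁻¹ * c, g⁆ : G) _ (h₁ * (h₂ * h₃)),
      ← mul_assoc (d * g * a⁻¹ * c * (a⁻¹ * b)) _ (h₁ * (h₂ * h₃)), mul_left_inj,
      ← comm_mul Hc (a⁻¹ * c) (a⁻¹ * b) g,
      show d * a⁻¹ * c * (a⁻¹ * b) * g = d * ((a⁻¹ * c * (a⁻¹ * b)) * g) from by group,
      swap' Hc (a⁻¹ * c * (a⁻¹ * b)) g]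
    group

private lemma L0f {a b c d p q r s : G} (g : G) (h : NP a b c d p q r s) :
    NP (a * g) (b * g) (c * g) d (p * g) q r s := by
  obtain ⟨h₁, h₂, h₃, m₁, m₂, m₃, rfl, rfl, rfl, rfl⟩ := h
  have mz₂ : ∀ w : G, w * ⁅g⁻¹, c⁻¹ * a⁆ = ⁅g⁻¹, c⁻¹ * a⁆ * w := fun w => Hc _ _ w
  have mz₃ : ∀ w : G, w * ⁅g⁻¹, b⁻¹ * a⁆ = ⁅g⁻¹, b⁻¹ * a⁆ * w := fun w => Hc _ _ w
  refine ⟨h₁, ⁅g⁻¹, c⁻¹ * a⁆ * h₂, ⁅g⁻¹, b⁻¹ * a⁆ * h₃, m₁, cmul mz₂ m₂, cmul mz₃ m₃,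
    ?_, ?_, ?_, ?_⟩
  · rw [mul_assoc, ← m₁ g]; group
  · rw [commutatorElement_def]; group
  · rw [commutatorElement_def]; group
  · -- hard case
    have tail : h₁ * ((⁅g⁻¹, c⁻¹ * a⁆ * h₂) * (⁅g⁻¹, b⁻¹ * a⁆ * h₃)) =
        ⁅g⁻¹, c⁻¹ * a⁆ * (⁅g⁻¹, b⁻¹ * a⁆ * (h₁ * (h₂ * h₃))) := by
      rw [mul_assoc _ h₂ _, pull mz₃ h₂ h₃, pull mz₂ h₁ _, pull mz₃ h₁ _]
    rw [tail]
    have z2 : (⁅g⁻¹, c⁻¹ * a⁆ : G) = ⁅a⁻¹ * c, g⁆⁻¹ := by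
      rw [show (c⁻¹ * a : G) = (a⁻¹ * c)⁻¹ from by group]
      exact zswap2 Hc _ _
    have z3 : (⁅g⁻¹, b⁻¹ * a⁆ : G) = ⁅a⁻¹ * b, g⁆⁻¹ := by
      rw [show (b⁻¹ * a : G) = (a⁻¹ * b)⁻¹ from by group]
      exact zswap2 Hc _ _
    rw [z2, z3, ← mul_assoc (⁅a⁻¹ * c, g⁆⁻¹ : G) _ (h₁ * (h₂ * h₃)),
      ← mul_assoc (d * (a * g)⁻¹ * (c * g) * ((a * g)⁻¹ * (b * g))) _ (h₁ * (h₂ * h₃)),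
      mul_left_inj,
      show d * (a * g)⁻¹ * (c * g) * ((a * g)⁻¹ * (b * g)) = 
        d * (g⁻¹ * ((a⁻¹ * c) * g)) * (g⁻¹ * ((a⁻¹ * b) * g)) from by group,
      conj' Hc (a⁻¹ * c) g, conj' Hc (a⁻¹ * b) g]
    have my₂ : ∀ w : G, w * ⁅a⁻¹ * c, g⁆ = ⁅a⁻¹ * c, g⁆ * w := fun w => Hc _ _ w
    rw [show d * (a⁻¹ * c * ⁅a⁻¹ * c, g⁆) * (a⁻¹ * b * ⁅a⁻¹ * b, g⁆) *
          (⁅a⁻¹ * c, g⁆⁻¹ * ⁅a⁻¹ * b, g⁆⁻¹) =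
        d * (a⁻¹ * c) * (⁅a⁻¹ * c, g⁆ * ((a⁻¹ * b) * (⁅a⁻¹ * b, g⁆ *
          (⁅a⁻¹ * c, g⁆⁻¹ * ⁅a⁻¹ * b, g⁆⁻¹)))) from by group,
      ← pull my₂ (a⁻¹ * b) _, ← mul_assoc (⁅a⁻¹ * c, g⁆ : G) (⁅a⁻¹ * b, g⁆ : G),
      Hc (a⁻¹ * b) g ⁅a⁻¹ * c, g⁆]
    group

end Steps

private def NilPred (x : Cube G) : Prop :=
  NP (x (v3 false false false)) (x (v3 false false true)) (x (v3 false true false))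
     (x (v3 true false false)) (x (v3 false true true)) (x (v3 true true false))
     (x (v3 true false true)) (x (v3 true true true))

open Classical in
private lemma mul_cubeElt_apply (x : Cube G) (α : Set Vtx) (g : G) (v : Vtx) :
    (x * cubeElt α g) v = if v ∈ α then x v * g else x v := by
  by_cases hv : v ∈ α <;> simp [cubeElt, hv, Pi.mul_apply]

private lemma nilpred_step (Hc : ∀ u v w : G, w * ⁅u, v⁆ = ⁅u, v⁆ * w) {x : Cube G}
    (h : NilPred x) (g : G) (i : Fin 3) (β : Bool) :
    NilPred (x * cubeElt {v : Vtx | v i = β} g) := by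
  simp only [NilPred] at h ⊢
  fin_cases i <;> cases β <;>
    · simp [cubeElt, Pi.mul_apply]
      first
        | exact L0t Hc g h
        | exact L0f Hc g h
        | exact L1t Hc g h
        | exact L1f Hc g h
        | exact L2t Hc g h
        | exact L2f Hc g h

private lemma nilpred_of_mem (Hc : ∀ u v w : G, w * ⁅u, v⁆ = ⁅u, v⁆ * w) {x : Cube G}
    (hx : x ∈ faceGroup G) : NilPred x := by
  induction hx using Subgroup.closure_induction_right with
  | one =>
      simp only [NilPred, Pi.one_apply]
      exact ⟨1, 1, 1, fun w => by simp, fun w => by simp, fun w => by simp,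
        by simp, by simp, by simp, by simp⟩
  | mul_right x hx y hy ih =>
      obtain ⟨g, α, ⟨i, β, rfl⟩, rfl⟩ := hy
      exact nilpred_step Hc ih g i β
  | mul_inv_cancel x hx y hy ih =>
      obtain ⟨g, α, ⟨i, β, rfl⟩, rfl⟩ := hy
      rw [cubeElt_inv]
      exact nilpred_step Hc ih g⁻¹ i β

private lemma join_app_false (p q : Quad G) (u w : Bool) :
    joinQuad p q (v3 false u w) = quadAt p u w := by simp [joinQuad]

private lemma join_app_true (p q : Quad G) (u w : Bool) :
    joinQuad p q (v3 true u w) = quadAt q u w := by simp [joinQuad]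

private lemma hc_of_nil (hnil : secondCommutator G = ⊥) :
    ∀ u v w : G, w * ⁅u, v⁆ = ⁅u, v⁆ * w := by
  intro u v w
  have h1 : ⁅w, ⁅u, v⁆⁆ ∈ secondCommutator G :=
    Subgroup.commutator_mem_commutator (Subgroup.mem_top w)
      (by rw [commutator_def]
          exact Subgroup.commutator_mem_commutator (Subgroup.mem_top u) (Subgroup.mem_top v))
  rw [hnil, Subgroup.mem_bot] at h1
  exact commutatorElement_eq_one_iff_mul_comm.mp h1

private lemma join_unique (hnil : secondCommutator G = ⊥)
    {x000 x001 x010 x011 x100 x101 x110 y z : G}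
    (hy : joinQuad (x000, x001, x010, x011) (x100, x101, x110, y) ∈ faceGroup G)
    (hz : joinQuad (x000, x001, x010, x011) (x100, x101, x110, z) ∈ faceGroup G) : y = z := by
  have Hc := hc_of_nil hnil
  have hm := nilpred_of_mem Hc (mul_mem hy (inv_mem hz))
  simp only [NilPred, NP, Pi.mul_apply, Pi.inv_apply, join_app_false, join_app_true,
    quadAt] at hm
  obtain ⟨h₁, h₂, h₃, m₁, m₂, m₃, e₁, e₂, e₃, e₄⟩ := hm
  simp only [mul_inv_cancel, one_mul, mul_one, inv_one] at e₁ e₂ e₃ e₄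
  rw [← e₁, ← e₂, ← e₃] at e₄
  simp only [one_mul, mul_one] at e₄
  exact mul_inv_eq_one.mp e₄

private lemma join_one_one : joinQuad ((1, 1, 1, 1) : Quad G) (1, 1, 1, 1) = 1 := by
  refine cube_ext fun p q r => ?_
  cases p <;> cases q <;> cases r <;> simp [joinQuad, quadAt, v3, Pi.one_apply]

private lemma join_vertex (t : G) :
    joinQuad ((1, 1, 1, 1) : Quad G) (1, 1, 1, t) =
      cubeElt ({v : Vtx | v 2 = true} ∩ ({v : Vtx | v 0 = true} ∩ {v : Vtx | v 1 = true})) t := by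
  refine cube_ext fun p q r => ?_
  cases p <;> cases q <;> cases r <;> simp [joinQuad, quadAt, v3, cubeElt]


end AuxProofs

/-- For any group `G`, `(G^{[2,1]}, G^{[3,2]})` is a weak parallelepiped
structure on `G`, and it is strong if and only if `G` is `2`-step nilpotent, i.e.
`G₃ = [G, [G,G]] = {1}`. -/
theorem group_parallelepiped (G : Type) [Group G] :
    IsWeakParallelepiped (edgeGroup2 G : Set (Quad G)) (faceGroup G : Set (Cube G)) ∧
    (IsStrongParallelepiped (edgeGroup2 G : Set (Quad G)) (faceGroup G : Set (Cube G)) ↔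
      secondCommutator G = ⊥) := by
  have hweak : IsWeakParallelepiped (edgeGroup2 G : Set (Quad G)) (faceGroup G : Set (Cube G)) := by
    refine ⟨⟨fun a b => P_refl a b, fun a b c d h => P_symm h,
      fun a b c d e f h1 h2 => P_trans h1 h2,
      fun a b c d h => P_mid h, fun a b c => ⟨c * a⁻¹ * b, P_complete a b c⟩⟩,
      fun x hx i b => faces_mem hx i b,
      fun σ c x hx => sym_mem σ c hx,
      fun p hp => joinQuad_self_mem hp,
      fun p q h => join_symm h,
      fun p q r h1 h2 => join_trans h1 h2,
      fun x000 x001 x010 x011 x100 x101 x110 H1 H2 H3 =>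
        join_exists x000 x001 x010 x011 x100 x101 x110 H1 H2 H3⟩
  refine ⟨hweak, ?_, ?_⟩
  · intro hs
    rw [eq_bot_iff]
    show ⁅(⊤ : Subgroup G), commutator G⁆ ≤ ⊥
    refine Subgroup.commutator_le.mpr fun g _ h hh => ?_
    rw [Subgroup.mem_bot]
    have h1 : ((1, 1, 1, 1) : Quad G) ∈ (edgeGroup2 G : Set (Quad G)) := P_refl 1 1
    obtain ⟨w, hw, huniq⟩ := hs.2 1 1 1 1 1 1 1 h1 h1 h1
    open scoped commutatorElement in
    have ht : ⁅g, h⁆ ∈ secondCommutator G :=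
      Subgroup.commutator_mem_commutator (Subgroup.mem_top g) hh
    open scoped commutatorElement in
    have hQt : joinQuad ((1, 1, 1, 1) : Quad G) (1, 1, 1, ⁅g, h⁆) ∈ faceGroup G := by
      rw [join_vertex]; exact vertexCube_mem ht
    have hQ1 : joinQuad ((1, 1, 1, 1) : Quad G) (1, 1, 1, 1) ∈ faceGroup G := by
      rw [join_one_one]; exact one_mem _
    open scoped commutatorElement in
    have e1 := huniq ⁅g, h⁆ hQt
    have e2 := huniq 1 hQ1
    rw [e1]; exact e2.symm
  · intro hnil
    refine ⟨hweak, ?_⟩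
    intro x000 x001 x010 x011 x100 x101 x110 H1 H2 H3
    obtain ⟨w, hw⟩ := join_exists x000 x001 x010 x011 x100 x101 x110 H1 H2 H3
    exact ⟨w, hw, fun y hy => join_unique hnil hy hw⟩

end HK
end
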